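/- arXiv:2507.18427 — 4 statements merged into one kernel-verified Lean document; each statement's English description precedes it below -/
import Mathlib

section
/- Let ν be a locally finite (Radon) measure on ℝ⁺ × ℝ and fix t̄ ≥ 0. Then for Lebesgue-almost every x̄ ∈ ℝ, the limit as r → 0⁺ of (1/r)·ν(((t̄−r, t̄) ∪ (t̄, t̄+r)) × (x̄−r, x̄+r)) equals 0. -/
open MeasureTheory Set Filter Topology

/-- For a locally finite measure ν on ℝ⁺ × ℝ and t̄ ≥ 0, for a.e. x̄ the
ν-measure of the punctured time slab around t̄ with spatial window of size r
is o(r) as r → 0⁺. -/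
theorem stmt_0 (ν : Measure (ℝ × ℝ)) [IsLocallyFiniteMeasure ν]
    (tb : ℝ) (htb : 0 ≤ tb) :
    ∀ᵐ xb : ℝ, Tendsto
      (fun r : ℝ =>
        (ν ((Ioo (tb - r) tb ∪ Ioo tb (tb + r)) ×ˢ Ioo (xb - r) (xb + r))).toReal / r)
      (𝓝[>] 0) (𝓝 0) := by
  -- shrinking punctured slabs
  set s : ℕ → Set ℝ := fun n => Ioo (tb - 1 / (n + 1)) tb ∪ Ioo tb (tb + 1 / (n + 1)) with hs
  have hpos : ∀ n : ℕ, (0 : ℝ) < 1 / (n + 1) := fun n => by positivity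
  have hle1 : ∀ n : ℕ, (1 : ℝ) / (n + 1) ≤ 1 := by
    intro n
    rw [div_le_one (by positivity)]
    linarith [Nat.cast_nonneg (α := ℝ) n]
  have hsub1 : ∀ n : ℕ, s n ⊆ Icc (tb - 1) (tb + 1) := by
    intro n t ht
    have h1 := hle1 n
    rcases ht with h | h <;> exact ⟨by linarith [h.1, h.2], by linarith [h.1, h.2]⟩
  have hanti : Antitone s := by
    intro m n hmn t ht
    have h1 : (1 : ℝ) / (n + 1) ≤ 1 / (m + 1) := by
      apply one_div_le_one_div_of_le (by positivity)
      have : (m : ℝ) ≤ n := Nat.cast_le.2 hmn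
      linarith
    rcases ht with h | h
    · exact Or.inl ⟨by linarith [h.1], h.2⟩
    · exact Or.inr ⟨h.1, by linarith [h.2]⟩
  -- projected measures
  set ρ : ℕ → Measure ℝ := fun n => (ν.restrict (s n ×ˢ (univ : Set ℝ))).map Prod.snd with hρ
  have hρapp : ∀ (n : ℕ) (A : Set ℝ), MeasurableSet A → ρ n A = ν (s n ×ˢ A) := by
    intro n A hA
    rw [hρ]
    rw [Measure.map_apply measurable_snd hA, Measure.restrict_apply (measurable_snd hA)]
    congr 1
    ext p
    simp only [mem_preimage, mem_inter_iff, Set.mem_prod, mem_univ, and_true]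
    tauto
  have hfin : ∀ n, IsLocallyFiniteMeasure (ρ n) := by
    intro n
    refine ⟨fun x => ⟨Ioo (x - 1) (x + 1), Ioo_mem_nhds (by linarith) (by linarith), ?_⟩⟩
    rw [hρapp n _ measurableSet_Ioo]
    calc ν (s n ×ˢ Ioo (x - 1) (x + 1))
        ≤ ν (Icc (tb - 1) (tb + 1) ×ˢ Icc (x - 1) (x + 1)) :=
          measure_mono (Set.prod_mono (hsub1 n) Ioo_subset_Icc_self)
      _ < ⊤ := (isCompact_Icc.prod isCompact_Icc).measure_lt_top
  set D : ℕ → ℝ → ENNReal := fun n => (ρ n).rnDeriv volume with hD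
  have hbes : ∀ᵐ x : ℝ, ∀ n : ℕ,
      Tendsto (fun r => ρ n (Metric.closedBall x r) / volume (Metric.closedBall x r))
        (𝓝[>] 0) (𝓝 (D n x)) := by
    rw [ae_all_iff]
    intro n
    haveI := hfin n
    exact Besicovitch.ae_tendsto_rnDeriv (ρ n) volume
  -- the infimum of the densities vanishes a.e.
  set g : ℝ → ENNReal := fun x => ⨅ n, D n x with hg
  have hgmeas : Measurable g := Measurable.iInf fun n => Measure.measurable_rnDeriv _ _
  have hslabzero : ∀ K : ℕ,
      Tendsto (fun m => ν (s m ×ˢ Icc (-(K : ℝ)) K)) atTop (𝓝 0) := by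
    intro K
    have hmeas : ∀ m : ℕ, NullMeasurableSet (s m ×ˢ Icc (-(K : ℝ)) K) ν :=
      fun m => (((measurableSet_Ioo.union measurableSet_Ioo).prod
        measurableSet_Icc)).nullMeasurableSet
    have hanti2 : Antitone fun m : ℕ => s m ×ˢ Icc (-(K : ℝ)) K :=
      fun m n hmn => Set.prod_mono (hanti hmn) subset_rfl
    have hfin2 : ∃ m : ℕ, ν (s m ×ˢ Icc (-(K : ℝ)) K) ≠ ⊤ := by
      refine ⟨0, ne_of_lt ?_⟩
      calc ν (s 0 ×ˢ Icc (-(K : ℝ)) K)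
          ≤ ν (Icc (tb - 1) (tb + 1) ×ˢ Icc (-(K : ℝ)) K) :=
            measure_mono (Set.prod_mono (hsub1 0) subset_rfl)
        _ < ⊤ := (isCompact_Icc.prod isCompact_Icc).measure_lt_top
    have hempty : (⋂ m, s m ×ˢ Icc (-(K : ℝ)) K) = ∅ := by
      ext ⟨t, x⟩
      simp only [mem_iInter, Set.mem_prod, mem_empty_iff_false, iff_false, not_forall]
      by_contra hcon
      push_neg at hcon
      have ht : ∀ m : ℕ, t ∈ s m := fun m => (hcon m).1
      have htne : t ≠ tb := by
        rcases ht 0 with h | h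
        · exact ne_of_lt h.2
        · exact ne_of_gt h.1
      have hdist : ∀ m : ℕ, |t - tb| < 1 / (m + 1) := by
        intro m
        rcases ht m with h | h
        · rw [abs_sub_lt_iff]; constructor <;> [linarith [h.2, hpos m]; linarith [h.1]]
        · rw [abs_sub_lt_iff]; constructor <;> [linarith [h.2]; linarith [h.1, hpos m]]
      have h0 : 0 < |t - tb| := abs_pos.2 (sub_ne_zero.2 htne)
      obtain ⟨m, hm⟩ := exists_nat_gt (1 / |t - tb|)
      have h1 : 1 / |t - tb| < (m : ℝ) + 1 := by linarith
      have h2 : 1 / ((m : ℝ) + 1) < |t - tb| := by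
        rw [div_lt_iff₀ (by positivity)]
        rw [div_lt_iff₀ h0] at h1
        linarith
      exact absurd (hdist m) (not_lt.2 h2.le)
    have := tendsto_measure_iInter_atTop hmeas hanti2 hfin2
    rwa [hempty, measure_empty] at this
  have hgzero : ∀ᵐ x : ℝ, g x = 0 := by
    have hKey : ∀ K : ℕ, ∀ᵐ x : ℝ, x ∈ Icc (-(K : ℝ)) K → g x = 0 := by
      intro K
      have hint : ∫⁻ x in Icc (-(K : ℝ)) K, g x = 0 := by
        refine le_antisymm ?_ (zero_le)
        refine ge_of_tendsto' (hslabzero K) fun m => ?_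
        calc ∫⁻ x in Icc (-(K : ℝ)) K, g x
            ≤ ∫⁻ x in Icc (-(K : ℝ)) K, D m x := lintegral_mono fun x => iInf_le _ m
          _ ≤ ρ m (Icc (-(K : ℝ)) K) := Measure.setLIntegral_rnDeriv_le _
          _ = ν (s m ×ˢ Icc (-(K : ℝ)) K) := hρapp m _ measurableSet_Icc
      have := (lintegral_eq_zero_iff hgmeas).1 hint
      exact (ae_restrict_iff' measurableSet_Icc).1 this
    rw [← ae_all_iff] at hKey
    filter_upwards [hKey] with x hx
    obtain ⟨K, hK⟩ := exists_nat_ge |x|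
    exact hx K ⟨by linarith [neg_abs_le x], by linarith [le_abs_self x]⟩
  -- main argument
  filter_upwards [hbes, hgzero] with x htend hgx
  rw [Metric.tendsto_nhds]
  intro ε hε
  obtain ⟨n, hn⟩ : ∃ n, D n x < ENNReal.ofReal (ε / 4) := by
    have h0 : (0 : ENNReal) < ENNReal.ofReal (ε / 4) := ENNReal.ofReal_pos.2 (by linarith)
    rw [← hgx] at h0
    exact iInf_lt_iff.1 h0
  have ev1 := (htend n).eventually_lt_const hn
  have ev2 : Ioo (0 : ℝ) (1 / (n + 1)) ∈ 𝓝[>] (0 : ℝ) :=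
    Ioo_mem_nhdsGT_of_mem ⟨le_refl 0, hpos n⟩
  filter_upwards [ev1, ev2] with r hr1 hr2
  have hr0 : 0 < r := hr2.1
  have hrn : r ≤ 1 / (n + 1) := hr2.2.le
  have hsubset : (Ioo (tb - r) tb ∪ Ioo tb (tb + r)) ×ˢ Ioo (x - r) (x + r)
      ⊆ s n ×ˢ Metric.closedBall x r := by
    apply Set.prod_mono
    · apply Set.union_subset_union
      · exact Ioo_subset_Ioo_left (by linarith)
      · exact Ioo_subset_Ioo_right (by linarith)
    · rw [Real.closedBall_eq_Icc]
      exact Ioo_subset_Icc_self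
  have key : ν ((Ioo (tb - r) tb ∪ Ioo tb (tb + r)) ×ˢ Ioo (x - r) (x + r))
      ≤ ρ n (Metric.closedBall x r) := by
    rw [hρapp n _ measurableSet_closedBall]
    exact measure_mono hsubset
  have hvol : volume (Metric.closedBall x r) = ENNReal.ofReal (2 * r) :=
    Real.volume_closedBall x r
  rw [hvol] at hr1
  have hlt : ρ n (Metric.closedBall x r) < ENNReal.ofReal (ε / 4) * ENNReal.ofReal (2 * r) :=
    (ENNReal.div_lt_iff (Or.inl (by simp [ENNReal.ofReal_eq_zero]; linarith))
      (Or.inl ENNReal.ofReal_ne_top)).1 hr1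
  have hlt2 : ν ((Ioo (tb - r) tb ∪ Ioo tb (tb + r)) ×ˢ Ioo (x - r) (x + r))
      < ENNReal.ofReal (ε / 4 * (2 * r)) := by
    rw [ENNReal.ofReal_mul (by linarith)]
    exact lt_of_le_of_lt key hlt
  have htr : (ν ((Ioo (tb - r) tb ∪ Ioo tb (tb + r)) ×ˢ Ioo (x - r) (x + r))).toReal
      < ε / 4 * (2 * r) := ENNReal.toReal_lt_of_lt_ofReal hlt2
  have hnonneg : 0 ≤ (ν ((Ioo (tb - r) tb ∪ Ioo tb (tb + r)) ×ˢ Ioo (x - r) (x + r))).toReal :=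
    ENNReal.toReal_nonneg
  rw [Real.dist_eq, sub_zero, abs_of_nonneg (div_nonneg hnonneg hr0.le), div_lt_iff₀ hr0]
  nlinarith
end

section
/- Let w ∈ L^∞(ℝ²; ℝ) and let σ : (t₁, t₂) → ℝ be a Lipschitz curve such that for almost every t ∈ (t₁,t₂) the point (t, σ(t)) is a Lebesgue point of w. Then lim_{δ→0} ∫_{t₁}^{t₂} (1/δ) ∫_{σ(t)−δ}^{σ(t)+δ} |w(t,x) − w(t, σ(t))| dx dt = 0. -/
open MeasureTheory Set Filter Topology

private lemma measurable_setLIntegral' {α : Type*} [MeasurableSpace α]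
    (F : α × ℝ → ENNReal) (hF : Measurable F) (a b : α → ℝ)
    (ha : Measurable a) (hb : Measurable b) :
    Measurable (fun t : α => ∫⁻ x in Set.Ioo (a t) (b t), F (t, x)) := by
  have hs : MeasurableSet {q : α × ℝ | a q.1 < q.2 ∧ q.2 < b q.1} :=
    (measurableSet_lt (ha.comp measurable_fst) measurable_snd).inter
      (measurableSet_lt measurable_snd (hb.comp measurable_fst))
  have key : ∀ t, (∫⁻ x in Set.Ioo (a t) (b t), F (t, x))
      = ∫⁻ x, ({q : α × ℝ | a q.1 < q.2 ∧ q.2 < b q.1}.indicator F) (t, x) := by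
    intro t
    rw [← lintegral_indicator measurableSet_Ioo]
    refine lintegral_congr fun x => ?_
    by_cases hx : x ∈ Set.Ioo (a t) (b t)
    · rw [Set.indicator_of_mem hx, Set.indicator_of_mem]
      exact ⟨hx.1, hx.2⟩
    · rw [Set.indicator_of_notMem hx, Set.indicator_of_notMem]
      simpa [Set.mem_Ioo] using hx
  simp_rw [key]
  exact (hF.indicator hs).lintegral_prod_right'

/-- The sup-metric ball condition as a subset of `ℝ × (ℝ × ℝ)`. -/
private def UUd (σ : ℝ → ℝ) (r : ℝ) : Set (ℝ × (ℝ × ℝ)) := {q | dist q.2 (q.1, σ q.1) < r}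

private noncomputable def EEd (w : ℝ × ℝ → ℝ) (σ : ℝ → ℝ) : ℝ × (ℝ × ℝ) → ENNReal :=
  fun q => ENNReal.ofReal |w q.2 - w (q.1, σ q.1)|

private noncomputable def lfd (w : ℝ × ℝ → ℝ) (σ : ℝ → ℝ) (δ t : ℝ) : ENNReal :=
  ∫⁻ x in Set.Ioo (σ t - δ) (σ t + δ), ENNReal.ofReal |w (t, x) - w (t, σ t)|

private noncomputable def qdd (w : ℝ × ℝ → ℝ) (σ : ℝ → ℝ) (δ t : ℝ) : ENNReal :=
  ∫⁻ s in Set.Ioo (t - δ) (t + δ), ENNReal.ofReal |w (s, σ s) - w (t, σ t)|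

private noncomputable def Pind (w : ℝ × ℝ → ℝ) (σ : ℝ → ℝ) (δ t : ℝ) : ENNReal :=
  ∫⁻ s in Set.Ioo (t - δ) (t + δ), ∫⁻ x in Set.Ioo (σ t - δ) (σ t + δ),
    ENNReal.ofReal |w (t, x) - w (s, σ s)|

private noncomputable def Phid (w : ℝ × ℝ → ℝ) (σ : ℝ → ℝ) (R δ s : ℝ) : ENNReal :=
  ∫⁻ p in Metric.ball ((s, σ s) : ℝ × ℝ) (R * δ), ENNReal.ofReal |w p - w (s, σ s)|

private noncomputable def Ddd (w : ℝ × ℝ → ℝ) (σ : ℝ → ℝ) (R δ s t : ℝ) : ENNReal :=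
  ∫⁻ x, (UUd σ (R * δ)).indicator (EEd w σ) (s, (t, x))

set_option maxHeartbeats 2000000 in
private lemma aux_main (w : ℝ × ℝ → ℝ) (C : ℝ) (hmeas : Measurable w) (hbd : ∀ p, |w p| ≤ C)
    (t₁ t₂ : ℝ) (ht : t₁ < t₂) (σ : ℝ → ℝ) (K : NNReal) (hσ : LipschitzWith K σ)
    (hleb : ∀ᵐ t ∂(volume.restrict (Ioo t₁ t₂)),
      Tendsto (fun r : ℝ => (volume (Metric.ball ((t, σ t) : ℝ × ℝ) r)).toReal⁻¹ *
        ∫ p in Metric.ball ((t, σ t) : ℝ × ℝ) r, |w p - w (t, σ t)|) (𝓝[>] 0) (𝓝 0)) :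
    Tendsto (fun δ : ℝ => ∫ t in Ioo t₁ t₂,
      (1 / δ) * ∫ x in Ioo (σ t - δ) (σ t + δ), |w (t, x) - w (t, σ t)|)
      (𝓝[>] 0) (𝓝 0) := by
  have hσc : Continuous σ := hσ.continuous
  have hσm : Measurable σ := hσc.measurable
  have hC0 : (0:ℝ) ≤ C := le_trans (abs_nonneg _) (hbd (0, 0))
  set R : ℝ := (K : ℝ) + 1 with hRdef
  have hR1 : (1:ℝ) ≤ R := le_add_of_nonneg_left K.2
  have hR0 : (0:ℝ) < R := lt_of_lt_of_le one_pos hR1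
  have hσL : ∀ a b : ℝ, |σ a - σ b| ≤ K * |a - b| := fun a b => by
    simpa [Real.dist_eq] using hσ.dist_le_mul a b
  have h2C : ∀ p q : ℝ × ℝ, |w p - w q| ≤ 2 * C := by
    intro p q
    have h := abs_sub_le (w p) 0 (w q)
    simp only [sub_zero, zero_sub, abs_neg] at h
    linarith [hbd p, hbd q]
  have hWm : Measurable (fun s : ℝ => w (s, σ s)) := hmeas.comp (measurable_id.prodMk hσm)
  -- measurability of the building blocks
  have hUU : ∀ r : ℝ, MeasurableSet (UUd σ r) := by
    intro r
    have hcont : Continuous fun q : ℝ × (ℝ × ℝ) => dist q.2 (q.1, σ q.1) :=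
      continuous_snd.dist (continuous_fst.prodMk (hσc.comp continuous_fst))
    exact measurableSet_lt hcont.measurable measurable_const
  have hEE : Measurable (EEd w σ) :=
    ((hmeas.comp measurable_snd).sub
      (hmeas.comp (measurable_fst.prodMk (hσm.comp measurable_fst)))).abs.ennreal_ofReal
  have meas_lf : ∀ δ : ℝ, Measurable (lfd w σ δ) := by
    intro δ
    exact measurable_setLIntegral'
      (fun q : ℝ × ℝ => ENNReal.ofReal |w (q.1, q.2) - w (q.1, σ q.1)|)
      (((hmeas.comp (measurable_fst.prodMk measurable_snd)).sub
        (hmeas.comp (measurable_fst.prodMk (hσm.comp measurable_fst)))).abs.ennreal_ofReal)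
      (fun t => σ t - δ) (fun t => σ t + δ)
      (hσm.sub measurable_const) (hσm.add measurable_const)
  have meas_qd : ∀ δ : ℝ, Measurable (qdd w σ δ) := by
    intro δ
    exact measurable_setLIntegral'
      (fun q : ℝ × ℝ => ENNReal.ofReal |w (q.2, σ q.2) - w (q.1, σ q.1)|)
      (((hmeas.comp (measurable_snd.prodMk (hσm.comp measurable_snd))).sub
        (hmeas.comp (measurable_fst.prodMk (hσm.comp measurable_fst)))).abs.ennreal_ofReal)
      (fun t => t - δ) (fun t => t + δ)
      (measurable_id.sub measurable_const) (measurable_id.add measurable_const)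
  have meas_Pinner : ∀ δ : ℝ, Measurable (fun p : ℝ × ℝ =>
      ∫⁻ x in Set.Ioo (σ p.1 - δ) (σ p.1 + δ), ENNReal.ofReal |w (p.1, x) - w (p.2, σ p.2)|) := by
    intro δ
    exact measurable_setLIntegral'
      (fun q : (ℝ × ℝ) × ℝ => ENNReal.ofReal |w (q.1.1, q.2) - w (q.1.2, σ q.1.2)|)
      (((hmeas.comp ((measurable_fst.comp measurable_fst).prodMk measurable_snd)).sub
        (hmeas.comp ((measurable_snd.comp measurable_fst).prodMk
          (hσm.comp (measurable_snd.comp measurable_fst))))).abs.ennreal_ofReal)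
      (fun p => σ p.1 - δ) (fun p => σ p.1 + δ)
      ((hσm.comp measurable_fst).sub measurable_const)
      ((hσm.comp measurable_fst).add measurable_const)
  have meas_Pind : ∀ δ : ℝ, Measurable (Pind w σ δ) := by
    intro δ
    exact measurable_setLIntegral' _ (meas_Pinner δ)
      (fun t => t - δ) (fun t => t + δ)
      (measurable_id.sub measurable_const) (measurable_id.add measurable_const)
  have meas_Dd_pair : ∀ δ : ℝ, Measurable (fun p : ℝ × ℝ => Ddd w σ R δ p.2 p.1) := by
    intro δ
    exact Measurable.lintegral_prod_right'
      (f := fun q : (ℝ × ℝ) × ℝ => (UUd σ (R * δ)).indicator (EEd w σ) (q.1.2, (q.1.1, q.2)))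
      ((hEE.indicator (hUU (R * δ))).comp
        ((measurable_snd.comp measurable_fst).prodMk
          ((measurable_fst.comp measurable_fst).prodMk measurable_snd)))
  have Phid_repr : ∀ δ s : ℝ, Phid w σ R δ s
      = ∫⁻ p : ℝ × ℝ, (UUd σ (R * δ)).indicator (EEd w σ) (s, p) := by
    intro δ s
    rw [Phid, ← lintegral_indicator measurableSet_ball]
    refine lintegral_congr fun p => ?_
    by_cases hp : p ∈ Metric.ball ((s, σ s) : ℝ × ℝ) (R * δ)
    · rw [Set.indicator_of_mem hp, Set.indicator_of_mem]
      · rfl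
      · exact Metric.mem_ball.mp hp
    · rw [Set.indicator_of_notMem hp, Set.indicator_of_notMem]
      exact fun hmem => hp (Metric.mem_ball.mpr hmem)
  have meas_Phid : ∀ δ : ℝ, Measurable (Phid w σ R δ) := by
    intro δ
    have : Phid w σ R δ = fun s => ∫⁻ p : ℝ × ℝ, (UUd σ (R * δ)).indicator (EEd w σ) (s, p) :=
      funext (Phid_repr δ)
    rw [this]
    exact (hEE.indicator (hUU (R * δ))).lintegral_prod_right'
  have Dd_int : ∀ δ s : ℝ, (∫⁻ t : ℝ, Ddd w σ R δ s t) = Phid w σ R δ s := by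
    intro δ s
    rw [Phid_repr δ s]
    rw [show (volume : Measure (ℝ × ℝ)) = (volume : Measure ℝ).prod volume from
      Measure.volume_eq_prod ℝ ℝ]
    have hmf : AEMeasurable (fun p : ℝ × ℝ => (UUd σ (R * δ)).indicator (EEd w σ) (s, p))
        ((volume : Measure ℝ).prod volume) :=
      ((hEE.indicator (hUU (R * δ))).comp measurable_prodMk_left).aemeasurable
    rw [lintegral_prod _ hmf]
    rfl
  -- elementary bounds
  have hlf_le : ∀ δ t : ℝ, lfd w σ δ t ≤ ENNReal.ofReal (2 * C) * ENNReal.ofReal (2 * δ) := by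
    intro δ t
    calc lfd w σ δ t
        ≤ ∫⁻ _ in Set.Ioo (σ t - δ) (σ t + δ), ENNReal.ofReal (2 * C) :=
          lintegral_mono fun x => ENNReal.ofReal_le_ofReal (h2C _ _)
      _ = ENNReal.ofReal (2 * C) * volume (Set.Ioo (σ t - δ) (σ t + δ)) :=
          setLIntegral_const _ _
      _ = ENNReal.ofReal (2 * C) * ENNReal.ofReal (2 * δ) := by
          rw [Real.volume_Ioo]; congr 1; ring
  have hqd_le : ∀ δ t : ℝ, qdd w σ δ t ≤ ENNReal.ofReal (2 * C) * ENNReal.ofReal (2 * δ) := by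
    intro δ t
    calc qdd w σ δ t
        ≤ ∫⁻ _ in Set.Ioo (t - δ) (t + δ), ENNReal.ofReal (2 * C) :=
          lintegral_mono fun s => ENNReal.ofReal_le_ofReal (h2C _ _)
      _ = ENNReal.ofReal (2 * C) * volume (Set.Ioo (t - δ) (t + δ)) := setLIntegral_const _ _
      _ = ENNReal.ofReal (2 * C) * ENNReal.ofReal (2 * δ) := by
          rw [Real.volume_Ioo]; congr 1; ring
  have hvolball : ∀ δ s : ℝ, volume (Metric.ball ((s, σ s) : ℝ × ℝ) (R * δ))
      = ENNReal.ofReal (2 * (R * δ)) * ENNReal.ofReal (2 * (R * δ)) := by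
    intro δ s
    rw [← ball_prod_same, show (volume : Measure (ℝ × ℝ)) = (volume : Measure ℝ).prod volume from
      Measure.volume_eq_prod ℝ ℝ, Measure.prod_prod, Real.volume_ball, Real.volume_ball]
  have hPhid_le : ∀ δ s : ℝ, Phid w σ R δ s
      ≤ ENNReal.ofReal (2 * C) * (ENNReal.ofReal (2 * (R * δ)) * ENNReal.ofReal (2 * (R * δ))) := by
    intro δ s
    calc Phid w σ R δ s
        ≤ ∫⁻ _ in Metric.ball ((s, σ s) : ℝ × ℝ) (R * δ), ENNReal.ofReal (2 * C) :=
          lintegral_mono fun p => ENNReal.ofReal_le_ofReal (h2C _ _)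
      _ = ENNReal.ofReal (2 * C) * volume (Metric.ball ((s, σ s) : ℝ × ℝ) (R * δ)) :=
          setLIntegral_const _ _
      _ = _ := by rw [hvolball]
  -- Step A: the target in terms of lintegrals
  have hAeq : ∀ δ : ℝ, 0 < δ →
      (∫ t in Ioo t₁ t₂, (1 / δ) * ∫ x in Ioo (σ t - δ) (σ t + δ), |w (t, x) - w (t, σ t)|)
      = (1 / δ) * (∫⁻ t in Ioo t₁ t₂, lfd w σ δ t).toReal := by
    intro δ hδ
    have h1 : ∀ t : ℝ, (∫ x in Ioo (σ t - δ) (σ t + δ), |w (t, x) - w (t, σ t)|)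
        = (lfd w σ δ t).toReal := by
      intro t
      have hsm : AEStronglyMeasurable (fun x : ℝ => |w (t, x) - w (t, σ t)|)
          (volume.restrict (Ioo (σ t - δ) (σ t + δ))) :=
        (((hmeas.comp (measurable_const.prodMk measurable_id)).sub
          measurable_const).abs).aestronglyMeasurable
      rw [integral_eq_lintegral_of_nonneg_ae (ae_of_all _ fun x => abs_nonneg _) hsm]
      rfl
    simp_rw [h1]
    rw [MeasureTheory.integral_const_mul]
    congr 1
    exact integral_toReal ((meas_lf δ).aemeasurable) (ae_of_all _ fun t =>
      lt_of_le_of_lt (hlf_le δ t) (ENNReal.mul_lt_top ENNReal.ofReal_lt_top ENNReal.ofReal_lt_top))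
  -- Step B: averaging in s
  have hB : ∀ δ : ℝ, 0 < δ →
      ENNReal.ofReal (2 * δ) * (∫⁻ t in Ioo t₁ t₂, lfd w σ δ t)
      ≤ (∫⁻ t in Ioo t₁ t₂, Pind w σ δ t)
        + ENNReal.ofReal (2 * δ) * ∫⁻ t in Ioo t₁ t₂, qdd w σ δ t := by
    intro δ hδ
    rw [← lintegral_const_mul _ (meas_lf δ), ← lintegral_const_mul _ (meas_qd δ),
      ← lintegral_add_left (meas_Pind δ)]
    refine lintegral_mono fun t => ?_
    have hmeass : Measurable fun s : ℝ => ∫⁻ x in Ioo (σ t - δ) (σ t + δ),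
        ENNReal.ofReal |w (t, x) - w (s, σ s)| :=
      measurable_setLIntegral' (fun q : ℝ × ℝ => ENNReal.ofReal |w (t, q.2) - w (q.1, σ q.1)|)
        (((hmeas.comp (measurable_const.prodMk measurable_snd)).sub
          (hmeas.comp (measurable_fst.prodMk (hσm.comp measurable_fst)))).abs.ennreal_ofReal)
        (fun _ => σ t - δ) (fun _ => σ t + δ) measurable_const measurable_const
    have hply : ∀ s : ℝ, lfd w σ δ t
        ≤ (∫⁻ x in Ioo (σ t - δ) (σ t + δ), ENNReal.ofReal |w (t, x) - w (s, σ s)|)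
          + ENNReal.ofReal |w (s, σ s) - w (t, σ t)| * ENNReal.ofReal (2 * δ) := by
      intro s
      have hmx : Measurable fun x : ℝ => ENNReal.ofReal |w (t, x) - w (s, σ s)| :=
        ((hmeas.comp (measurable_const.prodMk measurable_id)).sub
          measurable_const).abs.ennreal_ofReal
      have tri : ∀ x : ℝ, ENNReal.ofReal |w (t, x) - w (t, σ t)|
          ≤ ENNReal.ofReal |w (t, x) - w (s, σ s)| + ENNReal.ofReal |w (s, σ s) - w (t, σ t)| := by
        intro x
        rw [← ENNReal.ofReal_add (abs_nonneg _) (abs_nonneg _)]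
        exact ENNReal.ofReal_le_ofReal (abs_sub_le _ _ _)
      calc lfd w σ δ t
          ≤ ∫⁻ x in Ioo (σ t - δ) (σ t + δ),
            (ENNReal.ofReal |w (t, x) - w (s, σ s)| + ENNReal.ofReal |w (s, σ s) - w (t, σ t)|) :=
            lintegral_mono tri
        _ = (∫⁻ x in Ioo (σ t - δ) (σ t + δ), ENNReal.ofReal |w (t, x) - w (s, σ s)|)
            + ∫⁻ _ in Ioo (σ t - δ) (σ t + δ), ENNReal.ofReal |w (s, σ s) - w (t, σ t)| :=
            lintegral_add_left hmx _
        _ = _ := by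
            rw [setLIntegral_const, Real.volume_Ioo]
            congr 2
            ring
    have hcalc : ENNReal.ofReal (2 * δ) * lfd w σ δ t
        ≤ Pind w σ δ t + qdd w σ δ t * ENNReal.ofReal (2 * δ) := by
      calc ENNReal.ofReal (2 * δ) * lfd w σ δ t
          = ∫⁻ _ in Ioo (t - δ) (t + δ), lfd w σ δ t := by
            rw [setLIntegral_const, Real.volume_Ioo, mul_comm]
            congr 2
            ring
        _ ≤ ∫⁻ s in Ioo (t - δ) (t + δ),
            ((∫⁻ x in Ioo (σ t - δ) (σ t + δ), ENNReal.ofReal |w (t, x) - w (s, σ s)|)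
              + ENNReal.ofReal |w (s, σ s) - w (t, σ t)| * ENNReal.ofReal (2 * δ)) :=
            lintegral_mono fun s => hply s
        _ = Pind w σ δ t
            + (∫⁻ s in Ioo (t - δ) (t + δ), ENNReal.ofReal |w (s, σ s) - w (t, σ t)|)
              * ENNReal.ofReal (2 * δ) := by
            rw [lintegral_add_left hmeass, lintegral_mul_const (f := fun s => ENNReal.ofReal |w (s, σ s) - w (t, σ t)|) _
              ((hWm.sub measurable_const).abs.ennreal_ofReal)]
            rfl
        _ = Pind w σ δ t + qdd w σ δ t * ENNReal.ofReal (2 * δ) := rfl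
    calc ENNReal.ofReal (2 * δ) * lfd w σ δ t
        ≤ Pind w σ δ t + qdd w σ δ t * ENNReal.ofReal (2 * δ) := hcalc
      _ = Pind w σ δ t + ENNReal.ofReal (2 * δ) * qdd w σ δ t := by rw [mul_comm (qdd w σ δ t)]
  -- Step P1: domination by ball indicators
  have hP1 : ∀ δ : ℝ, 0 < δ →
      (∫⁻ t in Ioo t₁ t₂, Pind w σ δ t) ≤ ∫⁻ t in Ioo t₁ t₂, ∫⁻ s, Ddd w σ R δ s t := by
    intro δ hδ
    refine lintegral_mono fun t => ?_
    have hrepr : Pind w σ δ t = ∫⁻ s, (Ioo (t - δ) (t + δ)).indicator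
        (fun s => ∫⁻ x in Ioo (σ t - δ) (σ t + δ),
          ENNReal.ofReal |w (t, x) - w (s, σ s)|) s :=
      (lintegral_indicator measurableSet_Ioo _).symm
    rw [hrepr]
    refine lintegral_mono fun s => ?_
    by_cases hs : s ∈ Ioo (t - δ) (t + δ)
    · rw [Set.indicator_of_mem hs]
      have hDrepr : Ddd w σ R δ s t
          = ∫⁻ x, (UUd σ (R * δ)).indicator (EEd w σ) (s, (t, x)) := rfl
      rw [hDrepr, ← lintegral_indicator measurableSet_Ioo]
      refine lintegral_mono fun x => ?_
      by_cases hx : x ∈ Ioo (σ t - δ) (σ t + δ)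
      · rw [Set.indicator_of_mem hx, Set.indicator_of_mem]
        · exact le_refl _
        · show dist ((t, x) : ℝ × ℝ) (s, σ s) < R * δ
          rw [Prod.dist_eq]
          have h1 : |t - s| < δ := abs_sub_lt_iff.mpr ⟨by linarith [hs.1], by linarith [hs.2]⟩
          have h2 : |x - σ t| < δ := abs_sub_lt_iff.mpr ⟨by linarith [hx.2], by linarith [hx.1]⟩
          have h3 : |σ t - σ s| ≤ K * |t - s| := hσL t s
          have h4 : |x - σ s| ≤ |x - σ t| + |σ t - σ s| := abs_sub_le _ _ _
          have hKd : (K : ℝ) * |t - s| ≤ K * δ := mul_le_mul_of_nonneg_left h1.le K.2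
          have hRδ : R * δ = δ + K * δ := by rw [hRdef]; ring
          have hK0 : (0:ℝ) ≤ (K : ℝ) * δ := mul_nonneg K.2 hδ.le
          apply max_lt
          · rw [Real.dist_eq]
            linarith
          · rw [Real.dist_eq]
            linarith
      · rw [Set.indicator_of_notMem hx]
        exact zero_le
    · rw [Set.indicator_of_notMem hs]
      exact zero_le
  -- Fubini swap
  have hswap : ∀ δ : ℝ, (∫⁻ t in Ioo t₁ t₂, ∫⁻ s, Ddd w σ R δ s t)
      = ∫⁻ s, ∫⁻ t in Ioo t₁ t₂, Ddd w σ R δ s t := by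
    intro δ
    exact lintegral_lintegral_swap ((meas_Dd_pair δ).aemeasurable)
  -- split the s-domain
  have hsplit : ∀ δ : ℝ, (∫⁻ s, ∫⁻ t in Ioo t₁ t₂, Ddd w σ R δ s t)
      ≤ (∫⁻ s in Iic t₁, ∫⁻ t in Ioo t₁ t₂, Ddd w σ R δ s t)
        + ((∫⁻ s in Ioo t₁ t₂, ∫⁻ t in Ioo t₁ t₂, Ddd w σ R δ s t)
          + ∫⁻ s in Ici t₂, ∫⁻ t in Ioo t₁ t₂, Ddd w σ R δ s t) := by
    intro δ
    have hcover : (univ : Set ℝ) ⊆ Iic t₁ ∪ (Ioo t₁ t₂ ∪ Ici t₂) := by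
      intro s _
      rcases le_or_gt s t₁ with h | h
      · exact Or.inl h
      rcases lt_or_ge s t₂ with h2 | h2
      · exact Or.inr (Or.inl ⟨h, h2⟩)
      · exact Or.inr (Or.inr h2)
    calc (∫⁻ s, ∫⁻ t in Ioo t₁ t₂, Ddd w σ R δ s t)
        = ∫⁻ s in univ, ∫⁻ t in Ioo t₁ t₂, Ddd w σ R δ s t := (setLIntegral_univ _).symm
      _ ≤ ∫⁻ s in Iic t₁ ∪ (Ioo t₁ t₂ ∪ Ici t₂), ∫⁻ t in Ioo t₁ t₂, Ddd w σ R δ s t :=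
          lintegral_mono_set hcover
      _ ≤ _ := le_trans (lintegral_union_le _ _ _)
          (add_le_add_right (lintegral_union_le _ _ _) _)
  -- vanishing of far contributions
  have hΨ0 : ∀ δ : ℝ, 0 < δ → ∀ s : ℝ, (∀ t ∈ Ioo t₁ t₂, R * δ ≤ |t - s|) →
      (∫⁻ t in Ioo t₁ t₂, Ddd w σ R δ s t) = 0 := by
    intro δ hδ s hfar
    have hzero : ∀ t ∈ Ioo t₁ t₂, Ddd w σ R δ s t = (fun _ => (0:ENNReal)) t := by
      intro t ht'
      have hz : ∀ x : ℝ, (UUd σ (R * δ)).indicator (EEd w σ) (s, (t, x)) = 0 := by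
        intro x
        apply Set.indicator_of_notMem
        intro hmem
        have hmem' : dist ((t, x) : ℝ × ℝ) (s, σ s) < R * δ := hmem
        rw [Prod.dist_eq] at hmem'
        have h3 : dist t s < R * δ := lt_of_le_of_lt (le_max_left _ _) hmem'
        rw [Real.dist_eq] at h3
        exact absurd h3 (not_lt.mpr (hfar t ht'))
      show (∫⁻ x, (UUd σ (R * δ)).indicator (EEd w σ) (s, (t, x))) = 0
      simp only [hz, lintegral_zero]
    rw [setLIntegral_congr_fun_ae measurableSet_Ioo (ae_of_all _ hzero), lintegral_zero]
  -- edge estimates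
  have hedge1 : ∀ δ : ℝ, 0 < δ →
      (∫⁻ s in Iic t₁, ∫⁻ t in Ioo t₁ t₂, Ddd w σ R δ s t)
      ≤ (ENNReal.ofReal (2 * C) * (ENNReal.ofReal (2 * (R * δ)) * ENNReal.ofReal (2 * (R * δ))))
        * ENNReal.ofReal (R * δ) := by
    intro δ hδ
    calc (∫⁻ s in Iic t₁, ∫⁻ t in Ioo t₁ t₂, Ddd w σ R δ s t)
        ≤ ∫⁻ s in Iic t₁, (Ioc (t₁ - R * δ) t₁).indicator
            (fun _ => ENNReal.ofReal (2 * C) *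
              (ENNReal.ofReal (2 * (R * δ)) * ENNReal.ofReal (2 * (R * δ)))) s := by
          refine lintegral_mono_ae ?_
          filter_upwards [ae_restrict_mem measurableSet_Iic] with s hs
          by_cases hs2 : t₁ - R * δ < s
          · rw [Set.indicator_of_mem (Set.mem_Ioc.mpr ⟨hs2, hs⟩)]
            calc (∫⁻ t in Ioo t₁ t₂, Ddd w σ R δ s t)
                ≤ ∫⁻ t, Ddd w σ R δ s t := setLIntegral_le_lintegral _ _
              _ = Phid w σ R δ s := Dd_int δ s
              _ ≤ _ := hPhid_le δ s
          · rw [Set.indicator_of_notMem (fun hmem => hs2 (Set.mem_Ioc.mp hmem).1)]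
            refine le_of_eq (hΨ0 δ hδ s ?_)
            intro t ht'
            have h1 : s ≤ t₁ - R * δ := not_lt.mp hs2
            have h2 : t₁ < t := ht'.1
            linarith [le_abs_self (t - s)]
      _ ≤ ∫⁻ s, (Ioc (t₁ - R * δ) t₁).indicator
            (fun _ => ENNReal.ofReal (2 * C) *
              (ENNReal.ofReal (2 * (R * δ)) * ENNReal.ofReal (2 * (R * δ)))) s :=
          setLIntegral_le_lintegral _ _
      _ = (ENNReal.ofReal (2 * C) * (ENNReal.ofReal (2 * (R * δ)) * ENNReal.ofReal (2 * (R * δ))))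
          * volume (Ioc (t₁ - R * δ) t₁) := by
          rw [lintegral_indicator measurableSet_Ioc, setLIntegral_const]
      _ = _ := by
          rw [Real.volume_Ioc]
          have : t₁ - (t₁ - R * δ) = R * δ := by ring
          rw [this]
  have hedge2 : ∀ δ : ℝ, 0 < δ →
      (∫⁻ s in Ici t₂, ∫⁻ t in Ioo t₁ t₂, Ddd w σ R δ s t)
      ≤ (ENNReal.ofReal (2 * C) * (ENNReal.ofReal (2 * (R * δ)) * ENNReal.ofReal (2 * (R * δ))))
        * ENNReal.ofReal (R * δ) := by
    intro δ hδ
    calc (∫⁻ s in Ici t₂, ∫⁻ t in Ioo t₁ t₂, Ddd w σ R δ s t)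
        ≤ ∫⁻ s in Ici t₂, (Ico t₂ (t₂ + R * δ)).indicator
            (fun _ => ENNReal.ofReal (2 * C) *
              (ENNReal.ofReal (2 * (R * δ)) * ENNReal.ofReal (2 * (R * δ)))) s := by
          refine lintegral_mono_ae ?_
          filter_upwards [ae_restrict_mem measurableSet_Ici] with s hs
          by_cases hs2 : s < t₂ + R * δ
          · rw [Set.indicator_of_mem (Set.mem_Ico.mpr ⟨hs, hs2⟩)]
            calc (∫⁻ t in Ioo t₁ t₂, Ddd w σ R δ s t)
                ≤ ∫⁻ t, Ddd w σ R δ s t := setLIntegral_le_lintegral _ _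
              _ = Phid w σ R δ s := Dd_int δ s
              _ ≤ _ := hPhid_le δ s
          · rw [Set.indicator_of_notMem (fun hmem => hs2 (Set.mem_Ico.mp hmem).2)]
            refine le_of_eq (hΨ0 δ hδ s ?_)
            intro t ht'
            have h1 : t₂ + R * δ ≤ s := not_lt.mp hs2
            have h2 : t < t₂ := ht'.2
            have h3 : |t - s| = |s - t| := abs_sub_comm t s
            linarith [le_abs_self (s - t)]
      _ ≤ ∫⁻ s, (Ico t₂ (t₂ + R * δ)).indicator
            (fun _ => ENNReal.ofReal (2 * C) *
              (ENNReal.ofReal (2 * (R * δ)) * ENNReal.ofReal (2 * (R * δ)))) s :=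
          setLIntegral_le_lintegral _ _
      _ = (ENNReal.ofReal (2 * C) * (ENNReal.ofReal (2 * (R * δ)) * ENNReal.ofReal (2 * (R * δ))))
          * volume (Ico t₂ (t₂ + R * δ)) := by
          rw [lintegral_indicator measurableSet_Ico, setLIntegral_const]
      _ = _ := by
          rw [Real.volume_Ico]
          have : t₂ + R * δ - t₂ = R * δ := by ring
          rw [this]
  have hmid : ∀ δ : ℝ, (∫⁻ s in Ioo t₁ t₂, ∫⁻ t in Ioo t₁ t₂, Ddd w σ R δ s t)
      ≤ ∫⁻ s in Ioo t₁ t₂, Phid w σ R δ s :=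
    fun δ => lintegral_mono fun s =>
      le_of_le_of_eq (setLIntegral_le_lintegral _ _) (Dd_int δ s)
  -- finiteness
  have hvolI : volume (Ioo t₁ t₂) < ⊤ := by rw [Real.volume_Ioo]; exact ENNReal.ofReal_lt_top
  have hQfin : ∀ δ : ℝ, (∫⁻ t in Ioo t₁ t₂, qdd w σ δ t) < ⊤ := by
    intro δ
    calc (∫⁻ t in Ioo t₁ t₂, qdd w σ δ t)
        ≤ ∫⁻ _ in Ioo t₁ t₂, ENNReal.ofReal (2 * C) * ENNReal.ofReal (2 * δ) :=
          lintegral_mono fun t => hqd_le δ t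
      _ = (ENNReal.ofReal (2 * C) * ENNReal.ofReal (2 * δ)) * volume (Ioo t₁ t₂) :=
          setLIntegral_const _ _
      _ < ⊤ := ENNReal.mul_lt_top
          (ENNReal.mul_lt_top ENNReal.ofReal_lt_top ENNReal.ofReal_lt_top) hvolI
  have hMfin : ∀ δ : ℝ, (∫⁻ s in Ioo t₁ t₂, Phid w σ R δ s) < ⊤ := by
    intro δ
    calc (∫⁻ s in Ioo t₁ t₂, Phid w σ R δ s)
        ≤ ∫⁻ _ in Ioo t₁ t₂, ENNReal.ofReal (2 * C) *
            (ENNReal.ofReal (2 * (R * δ)) * ENNReal.ofReal (2 * (R * δ))) :=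
          lintegral_mono fun s => hPhid_le δ s
      _ = _ * volume (Ioo t₁ t₂) := setLIntegral_const _ _
      _ < ⊤ := ENNReal.mul_lt_top (ENNReal.mul_lt_top ENNReal.ofReal_lt_top
          (ENNReal.mul_lt_top ENNReal.ofReal_lt_top ENNReal.ofReal_lt_top)) hvolI
  -- master real inequality
  have hmaster : ∀ δ : ℝ, 0 < δ →
      (1 / δ) * (∫⁻ t in Ioo t₁ t₂, lfd w σ δ t).toReal
      ≤ (1 / (2 * δ^2)) * (∫⁻ s in Ioo t₁ t₂, Phid w σ R δ s).toReal
        + (1 / (2 * δ^2)) * (2 * ((2 * C) * ((2 * (R * δ)) * (2 * (R * δ))) * (R * δ)))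
        + (1 / δ) * (∫⁻ t in Ioo t₁ t₂, qdd w σ δ t).toReal := by
    intro δ hδ
    set Λ := ∫⁻ t in Ioo t₁ t₂, lfd w σ δ t with hΛ
    set M := ∫⁻ s in Ioo t₁ t₂, Phid w σ R δ s with hM
    set Q := ∫⁻ t in Ioo t₁ t₂, qdd w σ δ t with hQ
    set cE : ENNReal := (ENNReal.ofReal (2 * C) *
      (ENNReal.ofReal (2 * (R * δ)) * ENNReal.ofReal (2 * (R * δ)))) * ENNReal.ofReal (R * δ)
      with hcE
    have hchain : ENNReal.ofReal (2 * δ) * Λ ≤ (cE + (M + cE)) + ENNReal.ofReal (2 * δ) * Q := by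
      refine le_trans (hB δ hδ) (add_le_add_left ?_ _)
      refine le_trans (hP1 δ hδ) ?_
      rw [hswap δ]
      refine le_trans (hsplit δ) ?_
      exact add_le_add (hedge1 δ hδ) (add_le_add (hmid δ) (hedge2 δ hδ))
    have hcEne : cE ≠ ⊤ := by
      rw [hcE]
      exact (ENNReal.mul_lt_top (ENNReal.mul_lt_top ENNReal.ofReal_lt_top
        (ENNReal.mul_lt_top ENNReal.ofReal_lt_top ENNReal.ofReal_lt_top))
        ENNReal.ofReal_lt_top).ne
    have hMne : M ≠ ⊤ := (hMfin δ).ne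
    have hQ2ne : ENNReal.ofReal (2 * δ) * Q ≠ ⊤ :=
      (ENNReal.mul_lt_top ENNReal.ofReal_lt_top (hQfin δ)).ne
    have hMcEne : M + cE ≠ ⊤ := ENNReal.add_ne_top.mpr ⟨hMne, hcEne⟩
    have hLne : cE + (M + cE) ≠ ⊤ := ENNReal.add_ne_top.mpr ⟨hcEne, hMcEne⟩
    have hRHSne : (cE + (M + cE)) + ENNReal.ofReal (2 * δ) * Q ≠ ⊤ :=
      ENNReal.add_ne_top.mpr ⟨hLne, hQ2ne⟩
    have hC2 : (0:ℝ) ≤ 2 * C := by linarith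
    have h2δ : (0:ℝ) ≤ 2 * δ := by linarith
    have hRδnn : (0:ℝ) ≤ R * δ := mul_nonneg hR0.le hδ.le
    have h2Rδ : (0:ℝ) ≤ 2 * (R * δ) := by linarith
    have hreal := ENNReal.toReal_mono hRHSne hchain
    rw [ENNReal.toReal_mul, ENNReal.toReal_ofReal h2δ] at hreal
    rw [ENNReal.toReal_add hLne hQ2ne] at hreal
    rw [ENNReal.toReal_add hcEne hMcEne] at hreal
    rw [ENNReal.toReal_add hMne hcEne] at hreal
    rw [hcE] at hreal
    simp only [ENNReal.toReal_mul, ENNReal.toReal_ofReal hC2, ENNReal.toReal_ofReal h2δ,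
      ENNReal.toReal_ofReal h2Rδ, ENNReal.toReal_ofReal hRδnn] at hreal
    have hδne : δ ≠ 0 := ne_of_gt hδ
    have h1 : (1 / δ) * Λ.toReal = (2 * δ * Λ.toReal) * (1 / (2 * δ^2)) := by
      field_simp
    have h2 : (2 * δ * Λ.toReal) * (1 / (2 * δ^2))
        ≤ ((2 * C) * ((2 * (R * δ)) * (2 * (R * δ))) * (R * δ)
          + (M.toReal + (2 * C) * ((2 * (R * δ)) * (2 * (R * δ))) * (R * δ))
          + 2 * δ * Q.toReal) * (1 / (2 * δ^2)) :=
      mul_le_mul_of_nonneg_right hreal (by positivity)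
    refine le_trans (le_of_eq h1) (le_trans h2 (le_of_eq ?_))
    field_simp
    ring
  -- the edge term tends to zero
  have hT2 : Tendsto (fun δ : ℝ =>
      (1 / (2 * δ^2)) * (2 * ((2 * C) * ((2 * (R * δ)) * (2 * (R * δ))) * (R * δ))))
      (𝓝[>] 0) (𝓝 0) := by
    have hid : Tendsto (fun δ : ℝ => (8 * C * R^3) * δ) (𝓝 0) (𝓝 0) := by
      have h := Filter.Tendsto.const_mul (8 * C * R^3)
        (tendsto_id : Tendsto (fun x : ℝ => x) (𝓝 0) (𝓝 0))
      simpa using h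
    refine Tendsto.congr' ?_ (hid.mono_left nhdsWithin_le_nhds)
    filter_upwards [self_mem_nhdsWithin] with δ (hδ : δ ∈ Ioi 0)
    have hδ0 : (0:ℝ) < δ := hδ
    have hδne : δ ≠ 0 := ne_of_gt hδ0
    field_simp
    ring
  -- the main term tends to zero (dominated convergence + Lebesgue points)
  have hT1 : Tendsto (fun δ : ℝ =>
      (1 / (2 * δ^2)) * (∫⁻ s in Ioo t₁ t₂, Phid w σ R δ s).toReal) (𝓝[>] 0) (𝓝 0) := by
    have hmeasF : ∀ᶠ δ in 𝓝[>] (0:ℝ), AEStronglyMeasurable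
        (fun s => (1 / (2 * δ^2)) * (Phid w σ R δ s).toReal)
        (volume.restrict (Ioo t₁ t₂)) :=
      Eventually.of_forall fun δ =>
        ((ENNReal.measurable_toReal.comp (meas_Phid δ)).const_mul _).aestronglyMeasurable
    have hboundF : ∀ᶠ δ in 𝓝[>] (0:ℝ), ∀ᵐ s ∂(volume.restrict (Ioo t₁ t₂)),
        ‖(1 / (2 * δ^2)) * (Phid w σ R δ s).toReal‖ ≤ 4 * C * R^2 := by
      filter_upwards [self_mem_nhdsWithin] with δ (hδ : δ ∈ Ioi 0)
      have hδ0 : (0:ℝ) < δ := hδ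
      have hδne : δ ≠ 0 := ne_of_gt hδ0
      refine ae_of_all _ fun s => ?_
      have hC2 : (0:ℝ) ≤ 2 * C := by linarith
      have hRδnn : (0:ℝ) ≤ R * δ := mul_nonneg hR0.le hδ0.le
      have h2Rδ : (0:ℝ) ≤ 2 * (R * δ) := by linarith
      have h1 : (Phid w σ R δ s).toReal ≤ 2 * C * ((2 * (R * δ)) * (2 * (R * δ))) := by
        have h := ENNReal.toReal_mono (ENNReal.mul_lt_top ENNReal.ofReal_lt_top
          (ENNReal.mul_lt_top ENNReal.ofReal_lt_top ENNReal.ofReal_lt_top)).ne (hPhid_le δ s)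
        rwa [ENNReal.toReal_mul, ENNReal.toReal_mul, ENNReal.toReal_ofReal hC2,
          ENNReal.toReal_ofReal h2Rδ] at h
      rw [Real.norm_eq_abs, abs_of_nonneg (mul_nonneg (by positivity) ENNReal.toReal_nonneg)]
      calc (1 / (2 * δ^2)) * (Phid w σ R δ s).toReal
          ≤ (1 / (2 * δ^2)) * (2 * C * ((2 * (R * δ)) * (2 * (R * δ)))) :=
            mul_le_mul_of_nonneg_left h1 (by positivity)
        _ = 4 * C * R^2 := by field_simp; ring
    have hintF : Integrable (fun _ : ℝ => 4 * C * R^2) (volume.restrict (Ioo t₁ t₂)) :=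
      integrableOn_const hvolI.ne
    have hlimF : ∀ᵐ s ∂(volume.restrict (Ioo t₁ t₂)),
        Tendsto (fun δ : ℝ => (1 / (2 * δ^2)) * (Phid w σ R δ s).toReal)
          (𝓝[>] 0) (𝓝 0) := by
      filter_upwards [hleb] with s hs
      have hRt : Tendsto (fun δ : ℝ => R * δ) (𝓝[>] (0:ℝ)) (𝓝[>] (0:ℝ)) := by
        apply tendsto_nhdsWithin_of_tendsto_nhds_of_eventually_within
        · have h := Filter.Tendsto.const_mul R
            (tendsto_id : Tendsto (fun x : ℝ => x) (𝓝 0) (𝓝 0))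
          simpa using h.mono_left nhdsWithin_le_nhds
        · filter_upwards [self_mem_nhdsWithin] with δ (hδ : δ ∈ Ioi 0)
          exact mul_pos hR0 hδ
      have hcomp := hs.comp hRt
      have h2 := hcomp.const_mul (2 * R^2)
      rw [mul_zero] at h2
      refine Tendsto.congr' ?_ h2
      filter_upwards [self_mem_nhdsWithin] with δ (hδ : δ ∈ Ioi 0)
      have hδ0 : (0:ℝ) < δ := hδ
      have hδne : δ ≠ 0 := ne_of_gt hδ0
      have hRne : R ≠ 0 := ne_of_gt hR0
      have hsm : AEStronglyMeasurable (fun p : ℝ × ℝ => |w p - w (s, σ s)|)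
          (volume.restrict (Metric.ball ((s, σ s) : ℝ × ℝ) (R * δ))) :=
        ((hmeas.sub measurable_const).abs).aestronglyMeasurable
      have hJ : (Phid w σ R δ s).toReal
          = ∫ p in Metric.ball ((s, σ s) : ℝ × ℝ) (R * δ), |w p - w (s, σ s)| := by
        rw [integral_eq_lintegral_of_nonneg_ae (ae_of_all _ fun p => abs_nonneg _) hsm]
        rfl
      have hvol : (volume (Metric.ball ((s, σ s) : ℝ × ℝ) (R * δ))).toReal
          = (2 * (R * δ)) * (2 * (R * δ)) := by
        have hRδnn : (0:ℝ) ≤ R * δ := mul_nonneg hR0.le hδ0.le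
        have h2Rδ : (0:ℝ) ≤ 2 * (R * δ) := by linarith
        rw [hvolball δ s, ENNReal.toReal_mul, ENNReal.toReal_ofReal h2Rδ]
      show (2 * R^2) * ((volume (Metric.ball ((s, σ s) : ℝ × ℝ) (R * δ))).toReal⁻¹
          * ∫ p in Metric.ball ((s, σ s) : ℝ × ℝ) (R * δ), |w p - w (s, σ s)|)
        = (1 / (2 * δ^2)) * (Phid w σ R δ s).toReal
      rw [hJ, hvol]
      field_simp
    have key := tendsto_integral_filter_of_dominated_convergence
      (μ := volume.restrict (Ioo t₁ t₂)) (F := fun δ s => (1 / (2 * δ^2)) * (Phid w σ R δ s).toReal)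
      (f := fun _ => 0) (bound := fun _ => 4 * C * R^2) hmeasF hboundF hintF hlimF
    simp only [integral_zero] at key
    refine Tendsto.congr' ?_ key
    filter_upwards [self_mem_nhdsWithin] with δ (hδ : δ ∈ Ioi 0)
    rw [MeasureTheory.integral_const_mul]
    congr 1
    exact integral_toReal ((meas_Phid δ).aemeasurable) (ae_of_all _ fun s =>
      lt_of_le_of_lt (hPhid_le δ s) (ENNReal.mul_lt_top ENNReal.ofReal_lt_top
        (ENNReal.mul_lt_top ENNReal.ofReal_lt_top ENNReal.ofReal_lt_top)))
  -- the curve term tends to zero (1D Lebesgue differentiation)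
  have hWloc : LocallyIntegrable (fun s : ℝ => w (s, σ s)) volume := by
    rw [locallyIntegrable_iff]
    intro k hk
    exact Measure.integrableOn_of_bounded hk.measure_lt_top.ne hWm.aestronglyMeasurable
      (ae_of_all _ fun s => by simpa [Real.norm_eq_abs] using hbd (s, σ s))
  have hT3 : Tendsto (fun δ : ℝ =>
      (1 / δ) * (∫⁻ t in Ioo t₁ t₂, qdd w σ δ t).toReal) (𝓝[>] 0) (𝓝 0) := by
    have hmeasF : ∀ᶠ δ in 𝓝[>] (0:ℝ), AEStronglyMeasurable
        (fun t => (1 / δ) * (qdd w σ δ t).toReal) (volume.restrict (Ioo t₁ t₂)) :=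
      Eventually.of_forall fun δ =>
        ((ENNReal.measurable_toReal.comp (meas_qd δ)).const_mul _).aestronglyMeasurable
    have hboundF : ∀ᶠ δ in 𝓝[>] (0:ℝ), ∀ᵐ t ∂(volume.restrict (Ioo t₁ t₂)),
        ‖(1 / δ) * (qdd w σ δ t).toReal‖ ≤ 4 * C := by
      filter_upwards [self_mem_nhdsWithin] with δ (hδ : δ ∈ Ioi 0)
      have hδ0 : (0:ℝ) < δ := hδ
      have hδne : δ ≠ 0 := ne_of_gt hδ0
      refine ae_of_all _ fun t => ?_
      have hC2 : (0:ℝ) ≤ 2 * C := by linarith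
      have h2δ : (0:ℝ) ≤ 2 * δ := by linarith
      have h1 : (qdd w σ δ t).toReal ≤ 2 * C * (2 * δ) := by
        have h := ENNReal.toReal_mono
          (ENNReal.mul_lt_top ENNReal.ofReal_lt_top ENNReal.ofReal_lt_top).ne (hqd_le δ t)
        rwa [ENNReal.toReal_mul, ENNReal.toReal_ofReal hC2,
          ENNReal.toReal_ofReal h2δ] at h
      rw [Real.norm_eq_abs, abs_of_nonneg (mul_nonneg (one_div_pos.mpr hδ0).le
        ENNReal.toReal_nonneg)]
      calc (1 / δ) * (qdd w σ δ t).toReal ≤ (1 / δ) * (2 * C * (2 * δ)) :=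
          mul_le_mul_of_nonneg_left h1 (one_div_pos.mpr hδ0).le
        _ = 4 * C := by field_simp; ring
    have hintF : Integrable (fun _ : ℝ => 4 * C) (volume.restrict (Ioo t₁ t₂)) :=
      integrableOn_const hvolI.ne
    have hlimF : ∀ᵐ t ∂(volume.restrict (Ioo t₁ t₂)),
        Tendsto (fun δ : ℝ => (1 / δ) * (qdd w σ δ t).toReal) (𝓝[>] 0) (𝓝 0) := by
      have hBes := IsUnifLocDoublingMeasure.ae_tendsto_average_norm_sub
        (μ := (volume : Measure ℝ)) hWloc 1
      filter_upwards [ae_restrict_of_ae hBes] with t hx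
      have hmem : ∀ᶠ j in 𝓝[>] (0:ℝ), t ∈ Metric.closedBall ((fun _ : ℝ => t) j) (1 * j) := by
        filter_upwards [self_mem_nhdsWithin] with j (hj : j ∈ Ioi 0)
        have hj0 : (0:ℝ) < j := hj
        simp only [Metric.mem_closedBall, dist_self, one_mul]
        linarith
      have hav := hx (fun _ : ℝ => t) (fun j : ℝ => j) tendsto_id hmem
      have h2 := hav.const_mul (2:ℝ)
      rw [mul_zero] at h2
      refine Tendsto.congr' ?_ h2
      filter_upwards [self_mem_nhdsWithin] with δ (hδ : δ ∈ Ioi 0)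
      have hδ0 : (0:ℝ) < δ := hδ
      have hδne : δ ≠ 0 := ne_of_gt hδ0
      have hq : (qdd w σ δ t).toReal
          = ∫ s in Ioo (t - δ) (t + δ), |w (s, σ s) - w (t, σ t)| := by
        have hsm : AEStronglyMeasurable (fun s : ℝ => |w (s, σ s) - w (t, σ t)|)
            (volume.restrict (Ioo (t - δ) (t + δ))) :=
          ((hWm.sub measurable_const).abs).aestronglyMeasurable
        rw [integral_eq_lintegral_of_nonneg_ae (ae_of_all _ fun s => abs_nonneg _) hsm]
        rfl
      have hcb : (∫ y in Metric.closedBall t δ, ‖w (y, σ y) - w (t, σ t)‖)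
          = ∫ s in Ioo (t - δ) (t + δ), |w (s, σ s) - w (t, σ t)| := by
        rw [Real.closedBall_eq_Icc, integral_Icc_eq_integral_Ioo]
        simp [Real.norm_eq_abs]
      show 2 * ⨍ y in Metric.closedBall t δ, ‖w (y, σ y) - w (t, σ t)‖
          = (1 / δ) * (qdd w σ δ t).toReal
      have h2δ : (0:ℝ) ≤ 2 * δ := by linarith
      rw [setAverage_eq, hcb, hq, measureReal_def, Real.volume_closedBall, ENNReal.toReal_ofReal h2δ,
        smul_eq_mul]
      field_simp
    have key := tendsto_integral_filter_of_dominated_convergence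
      (μ := volume.restrict (Ioo t₁ t₂)) (F := fun δ t => (1 / δ) * (qdd w σ δ t).toReal)
      (f := fun _ => 0) (bound := fun _ => 4 * C) hmeasF hboundF hintF hlimF
    simp only [integral_zero] at key
    refine Tendsto.congr' ?_ key
    filter_upwards [self_mem_nhdsWithin] with δ (hδ : δ ∈ Ioi 0)
    rw [MeasureTheory.integral_const_mul]
    congr 1
    exact integral_toReal ((meas_qd δ).aemeasurable) (ae_of_all _ fun t =>
      lt_of_le_of_lt (hqd_le δ t)
        (ENNReal.mul_lt_top ENNReal.ofReal_lt_top ENNReal.ofReal_lt_top))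
  -- squeeze
  have hnn : ∀ᶠ δ in 𝓝[>] (0:ℝ), 0 ≤ ∫ t in Ioo t₁ t₂,
      (1 / δ) * ∫ x in Ioo (σ t - δ) (σ t + δ), |w (t, x) - w (t, σ t)| := by
    filter_upwards [self_mem_nhdsWithin] with δ (hδ : δ ∈ Ioi 0)
    have hδ0 : (0:ℝ) < δ := hδ
    refine integral_nonneg fun t => ?_
    exact mul_nonneg (one_div_pos.mpr hδ0).le (integral_nonneg fun x => abs_nonneg _)
  have hub : ∀ᶠ δ in 𝓝[>] (0:ℝ),
      (∫ t in Ioo t₁ t₂, (1 / δ) * ∫ x in Ioo (σ t - δ) (σ t + δ), |w (t, x) - w (t, σ t)|)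
      ≤ (1 / (2 * δ^2)) * (∫⁻ s in Ioo t₁ t₂, Phid w σ R δ s).toReal
        + (1 / (2 * δ^2)) * (2 * ((2 * C) * ((2 * (R * δ)) * (2 * (R * δ))) * (R * δ)))
        + (1 / δ) * (∫⁻ t in Ioo t₁ t₂, qdd w σ δ t).toReal := by
    filter_upwards [self_mem_nhdsWithin] with δ (hδ : δ ∈ Ioi 0)
    have hδ0 : (0:ℝ) < δ := hδ
    rw [hAeq δ hδ0]
    exact hmaster δ hδ0
  have hsum := (hT1.add hT2).add hT3
  simp only [add_zero] at hsum
  exact squeeze_zero' hnn hub hsum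

/-- If (t, σ(t)) is a Lebesgue point of the bounded function w for a.e.
t ∈ (t₁,t₂), where σ is Lipschitz, then the averaged L¹ distance of w along
the curve vanishes. -/
theorem stmt_1 (w : ℝ × ℝ → ℝ) (C : ℝ) (hmeas : Measurable w) (hbd : ∀ p, |w p| ≤ C)
    (t₁ t₂ : ℝ) (ht : t₁ < t₂) (σ : ℝ → ℝ) (K : NNReal)
    (hσ : LipschitzOnWith K σ (Ioo t₁ t₂))
    (hleb : ∀ᵐ t ∂(volume.restrict (Ioo t₁ t₂)),
      Tendsto (fun r : ℝ => (volume (Metric.ball ((t, σ t) : ℝ × ℝ) r)).toReal⁻¹ *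
        ∫ p in Metric.ball ((t, σ t) : ℝ × ℝ) r, |w p - w (t, σ t)|) (𝓝[>] 0) (𝓝 0)) :
    Tendsto (fun δ : ℝ => ∫ t in Ioo t₁ t₂,
      (1 / δ) * ∫ x in Ioo (σ t - δ) (σ t + δ), |w (t, x) - w (t, σ t)|)
      (𝓝[>] 0) (𝓝 0) := by
  obtain ⟨g, hg, hEq⟩ := hσ.extend_real
  have hleb' : ∀ᵐ t ∂(volume.restrict (Ioo t₁ t₂)),
      Tendsto (fun r : ℝ => (volume (Metric.ball ((t, g t) : ℝ × ℝ) r)).toReal⁻¹ *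
        ∫ p in Metric.ball ((t, g t) : ℝ × ℝ) r, |w p - w (t, g t)|) (𝓝[>] 0) (𝓝 0) := by
    filter_upwards [hleb, ae_restrict_mem measurableSet_Ioo] with t h1 h2
    rwa [← hEq h2]
  have hmain := aux_main w C hmeas hbd t₁ t₂ ht g K hg hleb'
  have heq : (fun δ : ℝ => ∫ t in Ioo t₁ t₂,
        (1 / δ) * ∫ x in Ioo (g t - δ) (g t + δ), |w (t, x) - w (t, g t)|)
      = (fun δ : ℝ => ∫ t in Ioo t₁ t₂,
        (1 / δ) * ∫ x in Ioo (σ t - δ) (σ t + δ), |w (t, x) - w (t, σ t)|) := by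
    funext δ
    apply setIntegral_congr_fun measurableSet_Ioo
    intro t ht'
    simp only [hEq ht']
  rw [← heq]
  exact hmain
end

section
/- Let u : (0,∞) × ℝ → ℝⁿ be bounded measurable, fix t̄ ≥ 0 and M > 0, and let ω be an L¹ modulus of continuity of u(t̄, ·) on [−M−1, M+1], i.e. ∫_{−M−1}^{M+1} |u(t̄,z) − u(t̄,z+δ)| dz ≤ ω(|δ|) with ω(s) → 0 as s → 0. Suppose that for almost every x̄ ∈ ℝ, lim_{r→0⁺} ∫₀¹ ∫_{−1}^{1} |u(t̄ + sr, x̄ + yr) − u(t̄, x̄)| dy ds = 0. Then lim_{r→0⁺} (1/r) ∫₀^r ∫_{−M}^{M} |u(t̄+s, x) − u(t̄, x)| dx ds = 0. -/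
open MeasureTheory Set Filter Topology

lemma aux_int {α : Type*} [MeasurableSpace α] {μ : Measure α} [IsFiniteMeasure μ] {f : α → ℝ}
    (hm : AEStronglyMeasurable f μ) {B : ℝ} (hB : ∀ x, |f x| ≤ B) : Integrable f μ :=
  ⟨hm, HasFiniteIntegral.of_bounded (C := B) (ae_of_all _ (fun x => by simpa using hB x))⟩

lemma aux_bd {n : ℕ} (u : ℝ × ℝ → EuclideanSpace ℝ (Fin n)) {C : ℝ} (hbd : ∀ p, ‖u p‖ ≤ C)
    (p q : ℝ × ℝ) : |‖u p - u q‖| ≤ 2 * C := by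
  rw [abs_of_nonneg (norm_nonneg _)]
  calc ‖u p - u q‖ ≤ ‖u p‖ + ‖u q‖ := norm_sub_le _ _
  _ ≤ 2 * C := by linarith [hbd p, hbd q]

lemma aux_intbd {μ : Measure ℝ} [IsFiniteMeasure μ] {f : ℝ → ℝ}
    {B : ℝ} (hB : ∀ x, |f x| ≤ B) :
    |∫ x, f x ∂μ| ≤ (μ univ).toReal * B := by
  calc |∫ x, f x ∂μ| ≤ B * (μ univ).toReal := by
        rw [← Real.norm_eq_abs]
        exact norm_integral_le_of_norm_le_const
          (ae_of_all _ fun x => by simpa [Real.norm_eq_abs] using hB x)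
    _ = (μ univ).toReal * B := mul_comm _ _

lemma aux_scale (f : ℝ → ℝ) {r : ℝ} (hr : 0 < r) :
    ∫ σ in Ioc (0:ℝ) 1, f (σ * r) = (1/r) * ∫ s in Ioc (0:ℝ) r, f s := by
  have h1 : ∀ σ : ℝ, (Ioc (0:ℝ) 1).indicator (fun σ => f (σ * r)) σ
      = (Ioc (0:ℝ) r).indicator f (σ * r) := by
    intro σ
    by_cases h : σ ∈ Ioc (0:ℝ) 1
    · rw [indicator_of_mem h, indicator_of_mem]
      exact ⟨mul_pos h.1 hr, by nlinarith [h.2]⟩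
    · rw [indicator_of_notMem h, indicator_of_notMem]
      intro hc
      have hσ : 0 < σ := by by_contra hσ; push_neg at hσ; nlinarith [hc.1]
      exact h ⟨hσ, le_of_mul_le_mul_right (by simpa using hc.2) hr⟩
  calc ∫ σ in Ioc (0:ℝ) 1, f (σ * r)
      = ∫ σ, (Ioc (0:ℝ) 1).indicator (fun σ => f (σ * r)) σ :=
        (integral_indicator measurableSet_Ioc).symm
    _ = ∫ σ, (Ioc (0:ℝ) r).indicator f (σ * r) := by simp_rw [h1]
    _ = |r⁻¹| • ∫ s, (Ioc (0:ℝ) r).indicator f s :=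
        MeasureTheory.Measure.integral_comp_mul_right _ r
    _ = (1/r) * ∫ s in Ioc (0:ℝ) r, f s := by
        rw [integral_indicator measurableSet_Ioc, abs_of_pos (inv_pos.mpr hr), smul_eq_mul, one_div]

lemma aux_shift {g : ℝ → ℝ} (hg : Measurable g) (hg0 : ∀ x, 0 ≤ g x) {B : ℝ}
    (hB : ∀ x, |g x| ≤ B) {c M : ℝ} (hc : |c| ≤ 1) :
    ∫ x in Icc (-M) M, g (x - c) ≤ ∫ z in Icc (-M - 1) (M + 1), g z := by
  have habs := abs_le.mp hc
  have e1 : ∫ x in Icc (-M) M, g (x - c) = ∫ z in Icc (-M - c) (M - c), g z := by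
    rw [← integral_indicator measurableSet_Icc, ← integral_indicator measurableSet_Icc]
    rw [← integral_add_right_eq_self (fun x => (Icc (-M) M).indicator (fun x => g (x - c)) x) c]
    congr 1; ext z
    by_cases h : z ∈ Icc (-M - c) (M - c)
    · rw [indicator_of_mem (by constructor <;> [linarith [h.1]; linarith [h.2]] :
        z + c ∈ Icc (-M) M), indicator_of_mem h, add_sub_cancel_right]
    · rw [indicator_of_notMem, indicator_of_notMem h]
      intro hc2
      exact h ⟨by linarith [hc2.1], by linarith [hc2.2]⟩
  rw [e1]
  apply setIntegral_mono_set
  · exact aux_int (hg.aestronglyMeasurable.restrict) hB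
  · exact ae_of_all _ fun x => hg0 x
  · exact ae_of_all _ (fun x hx => ⟨by linarith [hx.1], by linarith [hx.2]⟩)

/-- From a.e. convergence of parabolic rescalings and an L¹ modulus of continuity
at time t̄, deduce strong L¹ convergence of time averages on [-M, M]. -/
theorem stmt_4 (n : ℕ) (u : ℝ × ℝ → EuclideanSpace ℝ (Fin n)) (C : ℝ)
    (hmeas : Measurable u) (hbd : ∀ p, ‖u p‖ ≤ C)
    (tb : ℝ) (htb : 0 ≤ tb) (M : ℝ) (hM : 0 < M)
    (ω : ℝ → ℝ)
    (hω : ∀ δ : ℝ, ∫ z in Icc (-M - 1) (M + 1), ‖u (tb, z) - u (tb, z + δ)‖ ≤ ω |δ|)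
    (hω0 : Tendsto ω (𝓝[>] 0) (𝓝 0))
    (hres : ∀ᵐ xb : ℝ, Tendsto (fun r : ℝ =>
      ∫ s in Ioc (0 : ℝ) 1, ∫ y in Ioc (-1 : ℝ) 1, ‖u (tb + s * r, xb + y * r) - u (tb, xb)‖)
      (𝓝[>] 0) (𝓝 0)) :
    Tendsto (fun r : ℝ =>
      (1 / r) * ∫ s in Ioc (0 : ℝ) r, ∫ x in Icc (-M) M, ‖u (tb + s, x) - u (tb, x)‖)
      (𝓝[>] 0) (𝓝 0) := by
  classical
  have hC : 0 ≤ C := le_trans (norm_nonneg _) (hbd (0, 0))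
  set J : Set ℝ := Ioc (-1 : ℝ) 1 with hJdef
  set I : Set ℝ := Icc (-M) M with hIdef
  set S : Set ℝ := Icc (-M - 1) (M + 1) with hSdef
  have hJ2 : ((volume.restrict J) univ).toReal = 2 := by
    rw [Measure.restrict_apply_univ, hJdef, Real.volume_Ioc]
    norm_num
  have hIoc1 : ((volume.restrict (Ioc (0:ℝ) 1)) univ).toReal = 1 := by
    rw [Measure.restrict_apply_univ, Real.volume_Ioc]
    norm_num
  set G : ℝ → ℝ → ℝ := fun xb r =>
    ∫ σ in Ioc (0:ℝ) 1, ∫ y in J, ‖u (tb + σ * r, xb + y * r) - u (tb, xb)‖ with hGdef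
  -- strong measurability of the inner double integral
  have smK : ∀ r : ℝ, StronglyMeasurable
      (fun q : ℝ × ℝ => ∫ y in J, ‖u (tb + q.2 * r, q.1 + y * r) - u (tb, q.1)‖) := by
    intro r
    exact StronglyMeasurable.integral_prod_right'
      (f := fun p : (ℝ × ℝ) × ℝ => ‖u (tb + p.1.2 * r, p.1.1 + p.2 * r) - u (tb, p.1.1)‖)
      (Measurable.stronglyMeasurable (by fun_prop))
  have smG : ∀ r : ℝ, StronglyMeasurable (fun xb => G xb r) := by
    intro r
    exact StronglyMeasurable.integral_prod_right'
      (f := fun q : ℝ × ℝ => ∫ y in J, ‖u (tb + q.2 * r, q.1 + y * r) - u (tb, q.1)‖) (smK r)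
  have hinbd : ∀ r : ℝ, ∀ q : ℝ × ℝ,
      |∫ y in J, ‖u (tb + q.2 * r, q.1 + y * r) - u (tb, q.1)‖| ≤ 2 * (2 * C) := by
    intro r q
    have := aux_intbd (μ := volume.restrict J)
      (f := fun y => ‖u (tb + q.2 * r, q.1 + y * r) - u (tb, q.1)‖)
      (B := 2 * C) (fun y => aux_bd u hbd _ _)
    rwa [hJ2] at this
  have hGbd : ∀ r xb, |G xb r| ≤ 4 * C := by
    intro r xb
    have := aux_intbd (μ := volume.restrict (Ioc (0:ℝ) 1))
      (f := fun σ => ∫ y in J, ‖u (tb + σ * r, xb + y * r) - u (tb, xb)‖)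
      (B := 2 * (2 * C)) (fun σ => hinbd r (xb, σ))
    rw [hIoc1] at this
    calc |G xb r| ≤ 1 * (2 * (2 * C)) := this
      _ = 4 * C := by ring
  have hGnonneg : ∀ r xb, 0 ≤ G xb r :=
    fun r xb => integral_nonneg fun σ => integral_nonneg fun y => norm_nonneg _
  -- Step 1 : H(r) := ∫_{S} G xb r → 0 by dominated convergence
  have hH0 : Tendsto (fun r => ∫ xb in S, G xb r) (𝓝[>] (0:ℝ)) (𝓝 0) := by
    have h0 : (𝓝 (0:ℝ)) = 𝓝 (∫ xb in S, (0:ℝ)) := by simp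
    rw [h0]
    apply tendsto_integral_filter_of_dominated_convergence (bound := fun _ => 4 * C)
    · exact Eventually.of_forall fun r => ((smG r).aestronglyMeasurable).restrict
    · exact Eventually.of_forall fun r => ae_of_all _ fun xb => by
        rw [Real.norm_eq_abs]; exact hGbd r xb
    · exact integrable_const _
    · exact ae_restrict_of_ae hres
  -- Step 2 : main estimate
  have key : ∀ ε > (0:ℝ), ∀ᶠ r in 𝓝[>] (0:ℝ),
      (1 / r) * (∫ s in Ioc (0 : ℝ) r, ∫ x in I, ‖u (tb + s, x) - u (tb, x)‖)
        ≤ (1/2) * (∫ xb in S, G xb r) + ε / 2 := by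
    intro ε hε
    -- modulus of continuity smallness
    obtain ⟨δ₀, hδ₀pos, hδ₀⟩ : ∃ δ > (0:ℝ), ∀ t : ℝ, 0 < t → t < δ → ω t < ε / 4 := by
      have h := Metric.tendsto_nhds.mp hω0 (ε / 4) (by positivity)
      rw [eventually_nhdsWithin_iff] at h
      obtain ⟨δ, hδpos, hδ⟩ := Metric.eventually_nhds_iff.mp h
      refine ⟨δ, hδpos, fun t ht htδ => ?_⟩
      have := hδ (show dist t 0 < δ by rwa [Real.dist_eq, sub_zero, abs_of_pos ht]) ht
      rw [Real.dist_eq, sub_zero] at this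
      exact lt_of_le_of_lt (le_abs_self _) this
    filter_upwards [Ioo_mem_nhdsGT_of_mem
      (Set.left_mem_Ico.mpr (lt_min hδ₀pos one_pos))] with r hr
    obtain ⟨hr0, hrc⟩ := hr
    have hr1 : r ≤ 1 := le_of_lt (lt_of_lt_of_le hrc (min_le_right _ _))
    have hrδ : r < δ₀ := lt_of_lt_of_le hrc (min_le_left _ _)
    -- the kernel
    have hyr1 : ∀ y ∈ J, |y * r| ≤ 1 := by
      intro y hy
      rw [abs_mul, abs_of_pos hr0]
      have hy1 : |y| ≤ 1 := abs_le.mpr ⟨hy.1.le, hy.2⟩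
      calc |y| * r ≤ 1 * 1 := by
            apply mul_le_mul hy1 hr1 hr0.le zero_le_one
        _ = 1 := by norm_num
    -- shift estimate for the space translation of u at time tb+t
    have hshift1 : ∀ t : ℝ, ∀ y ∈ J,
        (∫ x in I, ‖u (tb + t, x) - u (tb, x - y * r)‖)
          ≤ ∫ z in S, ‖u (tb + t, z + y * r) - u (tb, z)‖ := by
      intro t y hy
      have h := aux_shift (g := fun z => ‖u (tb + t, z + y * r) - u (tb, z)‖)
        (by fun_prop) (fun z => norm_nonneg _) (B := 2 * C)
        (fun z => aux_bd u hbd _ _) (M := M) (hyr1 y hy)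
      have e : (∫ x in I, ‖u (tb + t, x) - u (tb, x - y * r)‖)
          = ∫ x in I, ‖u (tb + t, (x - y * r) + y * r) - u (tb, x - y * r)‖ := by
        apply setIntegral_congr_fun measurableSet_Icc
        intro x _
        simp
      rw [e]
      exact h
    -- shift estimate for the modulus of continuity term
    have hshift2 : ∀ y ∈ J, y ≠ 0 →
        (∫ x in I, ‖u (tb, x - y * r) - u (tb, x)‖) ≤ ε / 4 := by
      intro y hy hy0
      have h := aux_shift (g := fun z => ‖u (tb, z) - u (tb, z + y * r)‖)
        (by fun_prop) (fun z => norm_nonneg _) (B := 2 * C)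
        (fun z => aux_bd u hbd _ _) (M := M) (hyr1 y hy)
      have e : (∫ x in I, ‖u (tb, x - y * r) - u (tb, x)‖)
          = ∫ x in I, ‖u (tb, x - y * r) - u (tb, (x - y * r) + y * r)‖ := by
        apply setIntegral_congr_fun measurableSet_Icc
        intro x _
        simp
      have hω' : (∫ z in S, ‖u (tb, z) - u (tb, z + y * r)‖) ≤ ω |y * r| := hω (y * r)
      have hωsmall : ω |y * r| < ε / 4 := by
        apply hδ₀
        · exact abs_pos.mpr (mul_ne_zero hy0 hr0.ne')
        · rw [abs_mul, abs_of_pos hr0]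
          have hy1 : |y| ≤ 1 := abs_le.mpr ⟨hy.1.le, hy.2⟩
          calc |y| * r ≤ 1 * r := mul_le_mul_of_nonneg_right hy1 hr0.le
            _ = r := one_mul r
            _ < δ₀ := hrδ
      rw [e]
      exact le_trans h (le_trans hω' hωsmall.le)
    -- averaging in y for fixed time t
    have havg : ∀ t : ℝ,
        (∫ x in I, ‖u (tb + t, x) - u (tb, x)‖)
          ≤ (1/2) * (∫ y in J, ∫ z in S, ‖u (tb + t, z + y * r) - u (tb, z)‖) + ε / 4 := by
      intro t
      -- pointwise (in y) estimate
      have hyb : ∀ᵐ y ∂(volume.restrict J),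
          (∫ x in I, ‖u (tb + t, x) - u (tb, x)‖)
            ≤ (∫ z in S, ‖u (tb + t, z + y * r) - u (tb, z)‖) + ε / 4 := by
        have h0 : ∀ᵐ y ∂(volume.restrict J), y ≠ 0 := by
          refine ae_restrict_of_ae ?_
          have hset : {y : ℝ | ¬ y ≠ 0} = {(0:ℝ)} := by ext y; simp
          rw [ae_iff, hset]
          exact measure_singleton 0
        have hmem : ∀ᵐ y ∂(volume.restrict J), y ∈ J :=
          ae_restrict_mem measurableSet_Ioc
        filter_upwards [h0, hmem] with y hy0 hyJ
        have tri : ∀ x : ℝ, ‖u (tb + t, x) - u (tb, x)‖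
            ≤ ‖u (tb + t, x) - u (tb, x - y * r)‖ + ‖u (tb, x - y * r) - u (tb, x)‖ :=
          fun x => norm_sub_le_norm_sub_add_norm_sub _ _ _
        have int1 : IntegrableOn (fun x => ‖u (tb + t, x) - u (tb, x)‖) I volume :=
          aux_int ((by fun_prop : Measurable fun x : ℝ =>
            ‖u (tb + t, x) - u (tb, x)‖).aestronglyMeasurable.restrict)
            (B := 2 * C) (fun x => aux_bd u hbd _ _)
        have int2 : IntegrableOn (fun x => ‖u (tb + t, x) - u (tb, x - y * r)‖) I volume :=
          aux_int ((by fun_prop : Measurable fun x : ℝ =>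
            ‖u (tb + t, x) - u (tb, x - y * r)‖).aestronglyMeasurable.restrict)
            (B := 2 * C) (fun x => aux_bd u hbd _ _)
        have int3 : IntegrableOn (fun x => ‖u (tb, x - y * r) - u (tb, x)‖) I volume :=
          aux_int ((by fun_prop : Measurable fun x : ℝ =>
            ‖u (tb, x - y * r) - u (tb, x)‖).aestronglyMeasurable.restrict)
            (B := 2 * C) (fun x => aux_bd u hbd _ _)
        calc (∫ x in I, ‖u (tb + t, x) - u (tb, x)‖)
            ≤ ∫ x in I, (‖u (tb + t, x) - u (tb, x - y * r)‖
                + ‖u (tb, x - y * r) - u (tb, x)‖) :=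
              integral_mono int1 (int2.add int3) tri
          _ = (∫ x in I, ‖u (tb + t, x) - u (tb, x - y * r)‖)
                + ∫ x in I, ‖u (tb, x - y * r) - u (tb, x)‖ := integral_add int2 int3
          _ ≤ (∫ z in S, ‖u (tb + t, z + y * r) - u (tb, z)‖) + ε / 4 :=
              add_le_add (hshift1 t y hyJ) (hshift2 y hyJ hy0)
      -- integrate the pointwise bound over y ∈ J
      have smA : StronglyMeasurable (fun y : ℝ => ∫ z in S, ‖u (tb + t, z + y * r) - u (tb, z)‖) :=
        StronglyMeasurable.integral_prod_right'
          (f := fun p : ℝ × ℝ => ‖u (tb + t, p.2 + p.1 * r) - u (tb, p.2)‖)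
          (Measurable.stronglyMeasurable (by fun_prop))
      have hSbd : ∀ y : ℝ, |∫ z in S, ‖u (tb + t, z + y * r) - u (tb, z)‖|
          ≤ ((volume.restrict S) univ).toReal * (2 * C) :=
        fun y => aux_intbd (fun z => aux_bd u hbd _ _)
      have intA : Integrable (fun y : ℝ => ∫ z in S, ‖u (tb + t, z + y * r) - u (tb, z)‖)
          (volume.restrict J) :=
        aux_int (smA.aestronglyMeasurable.restrict) hSbd
      have hmono := integral_mono_ae (μ := volume.restrict J)
        (integrable_const _) (intA.add (integrable_const _)) hyb
      simp only [Pi.add_apply] at hmono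
      rw [integral_add intA (integrable_const _)] at hmono
      rw [setIntegral_const, setIntegral_const] at hmono
      rw [Measure.restrict_apply_univ] at hJ2
      rw [show volume.real J = 2 from hJ2] at hmono
      simp only [smul_eq_mul] at hmono
      linarith
    -- integrate over σ and use Fubini
    haveI : IsFiniteMeasure (volume.restrict J) := by rw [hJdef]; infer_instance
    haveI : IsFiniteMeasure (volume.restrict S) := by rw [hSdef]; infer_instance
    -- measurability / integrability for the triple integral
    have smL : StronglyMeasurable (fun q : ℝ × ℝ =>
        ∫ y in J, ‖u (tb + q.1 * r, q.2 + y * r) - u (tb, q.2)‖) :=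
      StronglyMeasurable.integral_prod_right'
        (f := fun p : (ℝ × ℝ) × ℝ => ‖u (tb + p.1.1 * r, p.1.2 + p.2 * r) - u (tb, p.1.2)‖)
        (Measurable.stronglyMeasurable (by fun_prop))
    have smB : StronglyMeasurable (fun q : ℝ × ℝ =>
        ∫ z in S, ‖u (tb + q.1 * r, z + q.2 * r) - u (tb, z)‖) :=
      StronglyMeasurable.integral_prod_right'
        (f := fun p : (ℝ × ℝ) × ℝ => ‖u (tb + p.1.1 * r, p.2 + p.1.2 * r) - u (tb, p.2)‖)
        (Measurable.stronglyMeasurable (by fun_prop))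
    have hSuniv : ∀ y t' : ℝ, |∫ z in S, ‖u (tb + t', z + y * r) - u (tb, z)‖|
        ≤ ((volume.restrict S) univ).toReal * (2 * C) :=
      fun y t' => aux_intbd (fun z => aux_bd u hbd _ _)
    have smAA : StronglyMeasurable (fun σ : ℝ =>
        ∫ y in J, ∫ z in S, ‖u (tb + σ * r, z + y * r) - u (tb, z)‖) :=
      StronglyMeasurable.integral_prod_right'
        (f := fun q : ℝ × ℝ => ∫ z in S, ‖u (tb + q.1 * r, z + q.2 * r) - u (tb, z)‖) smB
    have smP : StronglyMeasurable (fun σ : ℝ =>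
        ∫ x in I, ‖u (tb + σ * r, x) - u (tb, x)‖) :=
      StronglyMeasurable.integral_prod_right'
        (f := fun p : ℝ × ℝ => ‖u (tb + p.1 * r, p.2) - u (tb, p.2)‖)
        (Measurable.stronglyMeasurable (by fun_prop))
    have intP : Integrable (fun σ : ℝ => ∫ x in I, ‖u (tb + σ * r, x) - u (tb, x)‖)
        (volume.restrict (Ioc (0:ℝ) 1)) :=
      aux_int (smP.aestronglyMeasurable.restrict)
        (B := ((volume.restrict I) univ).toReal * (2 * C))
        (fun σ => aux_intbd (fun x => aux_bd u hbd _ _))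
    have intAA : Integrable (fun σ : ℝ =>
        ∫ y in J, ∫ z in S, ‖u (tb + σ * r, z + y * r) - u (tb, z)‖)
        (volume.restrict (Ioc (0:ℝ) 1)) :=
      aux_int (smAA.aestronglyMeasurable.restrict)
        (B := ((volume.restrict J) univ).toReal
          * (((volume.restrict S) univ).toReal * (2 * C)))
        (fun σ => aux_intbd (fun y => hSuniv y (σ * r)))
    have hmain : (∫ σ in Ioc (0:ℝ) 1, ∫ x in I, ‖u (tb + σ * r, x) - u (tb, x)‖)
        ≤ (1/2) * (∫ σ in Ioc (0:ℝ) 1, ∫ y in J,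
            ∫ z in S, ‖u (tb + σ * r, z + y * r) - u (tb, z)‖) + ε / 4 := by
      have h := integral_mono (μ := volume.restrict (Ioc (0:ℝ) 1)) intP
        ((intAA.const_mul (1/2)).add (integrable_const _)) (fun σ => havg (σ * r))
      simp only [Pi.add_apply] at h
      rw [integral_add (intAA.const_mul (1/2)) (integrable_const _),
        integral_const_mul, setIntegral_const] at h
      simp only [measureReal_def, Real.volume_Ioc, sub_zero, ENNReal.toReal_ofReal zero_le_one, one_smul,
        smul_eq_mul, one_mul] at h
      linarith
    -- Fubini: reorder the triple integral
    have hfub : (∫ σ in Ioc (0:ℝ) 1, ∫ y in J,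
          ∫ z in S, ‖u (tb + σ * r, z + y * r) - u (tb, z)‖) = ∫ xb in S, G xb r := by
      have swap1 : ∀ σ : ℝ, (∫ y in J, ∫ z in S, ‖u (tb + σ * r, z + y * r) - u (tb, z)‖)
          = ∫ z in S, ∫ y in J, ‖u (tb + σ * r, z + y * r) - u (tb, z)‖ := by
        intro σ
        apply integral_integral_swap
        exact aux_int (Measurable.aestronglyMeasurable (by fun_prop)) (B := 2 * C)
          (fun p => aux_bd u hbd _ _)
      have swap2 : (∫ σ in Ioc (0:ℝ) 1, ∫ z in S,
            ∫ y in J, ‖u (tb + σ * r, z + y * r) - u (tb, z)‖)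
          = ∫ z in S, ∫ σ in Ioc (0:ℝ) 1,
            ∫ y in J, ‖u (tb + σ * r, z + y * r) - u (tb, z)‖ := by
        apply integral_integral_swap
        apply aux_int (smL.aestronglyMeasurable)
          (B := ((volume.restrict J) univ).toReal * (2 * C))
        intro q
        exact aux_intbd (fun y => aux_bd u hbd _ _)
      calc (∫ σ in Ioc (0:ℝ) 1, ∫ y in J, ∫ z in S, ‖u (tb + σ * r, z + y * r) - u (tb, z)‖)
          = ∫ σ in Ioc (0:ℝ) 1, ∫ z in S,
              ∫ y in J, ‖u (tb + σ * r, z + y * r) - u (tb, z)‖ := by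
            exact setIntegral_congr_fun measurableSet_Ioc (fun σ _ => swap1 σ)
        _ = ∫ z in S, ∫ σ in Ioc (0:ℝ) 1,
              ∫ y in J, ‖u (tb + σ * r, z + y * r) - u (tb, z)‖ := swap2
        _ = ∫ xb in S, G xb r := rfl
    -- put everything together
    calc (1 / r) * (∫ s in Ioc (0 : ℝ) r, ∫ x in I, ‖u (tb + s, x) - u (tb, x)‖)
        = ∫ σ in Ioc (0:ℝ) 1, ∫ x in I, ‖u (tb + σ * r, x) - u (tb, x)‖ :=
          (aux_scale (fun s => ∫ x in I, ‖u (tb + s, x) - u (tb, x)‖) hr0).symm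
      _ ≤ (1/2) * (∫ σ in Ioc (0:ℝ) 1, ∫ y in J,
            ∫ z in S, ‖u (tb + σ * r, z + y * r) - u (tb, z)‖) + ε / 4 := hmain
      _ = (1/2) * (∫ xb in S, G xb r) + ε / 4 := by rw [hfub]
      _ ≤ (1/2) * (∫ xb in S, G xb r) + ε / 2 := by linarith
  -- Step 3: conclusion
  rw [Metric.tendsto_nhds]
  intro ε hε
  have h1 := key (ε / 2) (by positivity)
  have h2 : ∀ᶠ r in 𝓝[>] (0:ℝ), |∫ xb in S, G xb r| < ε / 2 := by
    have := Metric.tendsto_nhds.mp hH0 (ε / 2) (by positivity)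
    simpa [Real.dist_eq] using this
  filter_upwards [h1, h2, self_mem_nhdsWithin] with r hr1 hr2 hr3
  have hr0 : (0:ℝ) < r := hr3
  have hnn : 0 ≤ (1 / r) * ∫ s in Ioc (0 : ℝ) r, ∫ x in I, ‖u (tb + s, x) - u (tb, x)‖ := by
    apply mul_nonneg (by positivity)
    exact integral_nonneg fun s => integral_nonneg fun x => norm_nonneg _
  rw [Real.dist_eq, sub_zero, abs_of_nonneg hnn]
  have hH : (∫ xb in S, G xb r) ≤ |∫ xb in S, G xb r| := le_abs_self _
  calc (1 / r) * ∫ s in Ioc (0 : ℝ) r, ∫ x in I, ‖u (tb + s, x) - u (tb, x)‖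
      ≤ (1/2) * (∫ xb in S, G xb r) + (ε / 2) / 2 := hr1
    _ < ε := by nlinarith [hr2, hH]
end

section
/- Let μ_η be a locally finite signed measure on (0,∞) × ℝ equal in distributions to ∂_t η(u) + ∂_x q(u), where η, q are Lipschitz and u ∈ L^∞((0,∞) × ℝ; ℝ²) satisfies u ∈ C⁰((0,∞); L¹_loc(ℝ)). Then for every t̄ > 0, |μ_η|({t = t̄}) = 0. -/
open MeasureTheory Set Filter Topology Manifold
set_option maxHeartbeats 1000000

-- helper: integrable if bounded with support in finite measure set
lemma integrable_of_bound_support {α : Type*} [MeasurableSpace α] (μ : Measure α)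
    (f : α → ℝ) (s : Set α) (hf : AEStronglyMeasurable f μ) (hs : MeasurableSet s)
    (hμs : μ s < ⊤) (c : ℝ) (hb : ∀ x, ‖f x‖ ≤ c) (h0 : ∀ x ∉ s, f x = 0) :
    Integrable f μ := by
  refine Integrable.mono' (g := s.indicator fun _ => c) ((integrable_indicator_iff hs).2 ?_) hf (.of_forall fun x => ?_)
  · exact integrableOn_const hμs.ne
  · by_cases hx : x ∈ s
    · simpa [indicator_of_mem hx] using hb x
    · simp [indicator_of_notMem hx, h0 x hx]

-- smooth Urysohn on ℝ
lemma smooth_urysohn (K U : Set ℝ) (hK : IsCompact K) (hU : IsOpen U) (hKU : K ⊆ U) :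
    ∃ f : ℝ → ℝ, ContDiff ℝ (⊤ : ℕ∞) f ∧ HasCompactSupport f ∧ (∀ x, f x ∈ Icc (0:ℝ) 1) ∧
      EqOn f 1 K ∧ tsupport f ⊆ U := by
  obtain ⟨L, hLc, hKL, hLU⟩ := exists_compact_between hK hU hKU
  obtain ⟨f, hf0, hf1, hf01⟩ := exists_contMDiffMap_zero_one_of_isClosed (n := (⊤ : ℕ∞)) (𝓘(ℝ, ℝ))
    (isOpen_interior.isClosed_compl) hK.isClosed
    (disjoint_compl_left_iff.2 hKL)
  have hsupp : tsupport f ⊆ L := by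
    refine closure_minimal (fun x hx => ?_) hLc.isClosed
    by_contra hxL
    exact hx (hf0 fun hxi => hxL (interior_subset hxi))
  refine ⟨f, contMDiff_iff_contDiff.1 f.contMDiff,
    hLc.of_isClosed_subset (isClosed_tsupport f) hsupp, hf01, fun x hx => hf1 hx,
    hsupp.trans hLU⟩

lemma le_on_open (σ ρ : Measure ℝ) [IsFiniteMeasureOnCompacts σ] [IsFiniteMeasureOnCompacts ρ]
    (h : ∀ ψ : ℝ → ℝ, ContDiff ℝ (⊤:ℕ∞) ψ → HasCompactSupport ψ → (∀ x, ψ x ∈ Icc (0:ℝ) 1) →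
      ∫ x, ψ x ∂σ = ∫ x, ψ x ∂ρ) (U : Set ℝ) (hU : IsOpen U) : σ U ≤ ρ U := by
  rw [hU.measure_eq_iSup_isCompact]
  refine iSup₂_le fun K hKU => iSup_le fun hK => ?_
  obtain ⟨f, hfs, hfc, hf01, hfK, hfU⟩ := smooth_urysohn K U hK hU hKU
  have hfσ : Integrable f σ := hfs.continuous.integrable_of_hasCompactSupport hfc
  have hfρ : Integrable f ρ := hfs.continuous.integrable_of_hasCompactSupport hfc
  have h1 : (σ K).toReal ≤ ∫ x, f x ∂σ := by
    have e : ∫ x in K, f x ∂σ = (σ K).toReal := by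
      rw [setIntegral_congr_fun hK.measurableSet (fun x hx => hfK hx)]
      simp [Measure.real]
    rw [← e]
    exact setIntegral_le_integral hfσ (.of_forall fun x => (hf01 x).1)
  have h2 : ∫ x, f x ∂ρ ≤ (ρ (tsupport f)).toReal := by
    rw [← setIntegral_eq_integral_of_forall_compl_eq_zero
      (fun x hx => image_eq_zero_of_notMem_tsupport hx)]
    calc ∫ x in tsupport f, f x ∂ρ
        ≤ ∫ _x in tsupport f, (1:ℝ) ∂ρ := by
          refine setIntegral_mono_on hfρ.integrableOn
            (integrableOn_const hfc.measure_lt_top.ne)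
            (isClosed_tsupport f).measurableSet (fun x _ => (hf01 x).2)
      _ = (ρ (tsupport f)).toReal := by simp [Measure.real]
  have h4 : σ K ≤ ρ (tsupport f) := by
    rw [← ENNReal.toReal_le_toReal hK.measure_lt_top.ne hfc.measure_lt_top.ne]
    exact h1.trans ((h f hfs hfc hf01).le.trans h2)
  exact h4.trans (measure_mono hfU)

lemma measure_ext_of_smooth (τp τm : Measure ℝ) [IsFiniteMeasureOnCompacts τp]
    [IsFiniteMeasureOnCompacts τm]
    (h : ∀ ψ : ℝ → ℝ, ContDiff ℝ (⊤:ℕ∞) ψ → HasCompactSupport ψ → (∀ x, ψ x ∈ Icc (0:ℝ) 1) →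
      ∫ x, ψ x ∂τp = ∫ x, ψ x ∂τm) : τp = τm := by
  ext s _hs
  rw [Set.measure_eq_iInf_isOpen s τp, Set.measure_eq_iInf_isOpen s τm]
  exact iInf_congr fun U => iInf_congr fun _hsU => iInf_congr fun hUo =>
    le_antisymm (le_on_open τp τm h U hUo)
      (le_on_open τm τp (fun ψ a b c => (h ψ a b c).symm) U hUo)
set_option maxHeartbeats 1000000

lemma integrable_of_bound_support' {α : Type*} [MeasurableSpace α] (μ : Measure α)
    (f : α → ℝ) (s : Set α) (hf : AEStronglyMeasurable f μ) (hs : MeasurableSet s)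
    (hμs : μ s < ⊤) (c : ℝ) (hb : ∀ x, ‖f x‖ ≤ c) (h0 : ∀ x ∉ s, f x = 0) :
    Integrable f μ := by
  refine Integrable.mono' (g := s.indicator fun _ => c)
    ((integrable_indicator_iff hs).2 ?_) hf (.of_forall fun x => ?_)
  · exact integrableOn_const hμs.ne
  · by_cases hx : x ∈ s
    · simpa [indicator_of_mem hx] using hb x
    · simp [indicator_of_notMem hx, h0 x hx]

lemma key_limit (u : ℝ × ℝ → ℝ × ℝ) (hmeas : Measurable u) (C : ℝ)
    (hbd : ∀ p, ‖u p‖ ≤ C)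
    (η q : ℝ × ℝ → ℝ) (Kη Kq : NNReal) (hη : LipschitzWith Kη η) (hq : LipschitzWith Kq q)
    (hcont : ∀ t : ℝ, 0 < t → ∀ M : ℝ, 0 < M →
      Tendsto (fun s : ℝ => ∫ x in Icc (-M) M, ‖u (s, x) - u (t, x)‖) (𝓝 t) (𝓝 0))
    (μp μm : Measure (ℝ × ℝ)) [IsLocallyFiniteMeasure μp] [IsLocallyFiniteMeasure μm]
    (hrepr : ∀ φ : ℝ × ℝ → ℝ, ContDiff ℝ 1 φ → HasCompactSupport φ →
      tsupport φ ⊆ {p : ℝ × ℝ | 0 < p.1} →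
      (∫ p, φ p ∂μp) - (∫ p, φ p ∂μm) =
        -∫ p in {p : ℝ × ℝ | 0 < p.1},
          (fderiv ℝ φ p (1, 0) * η (u p) + fderiv ℝ φ p (0, 1) * q (u p)))
    (tb : ℝ) (htb : 0 < tb)
    (ψ : ℝ → ℝ) (hψs : ContDiff ℝ (⊤:ℕ∞) ψ) (hψc : HasCompactSupport ψ) :
    ∫ p in {p : ℝ × ℝ | p.1 = tb}, ψ p.2 ∂μp
      = ∫ p in {p : ℝ × ℝ | p.1 = tb}, ψ p.2 ∂μm := by
  classical
  -- basic constants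
  have hψ1 : ContDiff ℝ 1 ψ := hψs.of_le (by exact_mod_cast le_top)
  obtain ⟨r, hr⟩ := hψc.isBounded.subset_closedBall 0
  set M : ℝ := max r 1 with hMdef
  have hM : 0 < M := lt_of_lt_of_le one_pos (le_max_right _ _)
  have hψ0 : ∀ x : ℝ, x ∉ Icc (-M) M → ψ x = 0 := by
    intro x hx
    apply image_eq_zero_of_notMem_tsupport
    intro hmem
    have := hr hmem
    rw [Metric.mem_closedBall, Real.dist_eq, sub_zero] at this
    exact hx ⟨neg_le_of_abs_le (this.trans (le_max_left _ _)),
      le_of_abs_le (this.trans (le_max_left _ _))⟩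
  obtain ⟨Cψ, hCψ⟩ := hψc.exists_bound_of_continuous hψs.continuous
  have hψ'c : HasCompactSupport (deriv ψ) := hψc.deriv
  have hψ'cont : Continuous (deriv ψ) := hψs.continuous_deriv (by exact_mod_cast le_top)
  obtain ⟨Cψ', hCψ'⟩ := hψ'c.exists_bound_of_continuous hψ'cont
  have hψ'0 : ∀ x : ℝ, x ∉ Icc (-M) M → deriv ψ x = 0 := by
    intro x hx
    by_contra hne
    have hmem : x ∈ tsupport ψ :=
      closure_minimal support_deriv_subset (isClosed_tsupport ψ)
        (subset_closure (Function.mem_support.2 hne))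
    have := hr hmem
    rw [Metric.mem_closedBall, Real.dist_eq, sub_zero] at this
    exact hx ⟨neg_le_of_abs_le (this.trans (le_max_left _ _)),
      le_of_abs_le (this.trans (le_max_left _ _))⟩
  have hC0 : 0 ≤ C := (norm_nonneg _).trans (hbd (0, 0))
  set Bη : ℝ := ‖η 0‖ + Kη * C with hBηdef
  set Bq : ℝ := ‖q 0‖ + Kq * C with hBqdef
  have hBη : ∀ p, ‖η (u p)‖ ≤ Bη := by
    intro p
    calc ‖η (u p)‖ ≤ ‖η 0‖ + ‖η (u p) - η 0‖ := norm_le_insert' _ _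
    _ ≤ ‖η 0‖ + Kη * C := by
        gcongr
        have h1 := hη.dist_le_mul (u p) 0
        rw [dist_zero_right] at h1
        rw [← dist_eq_norm]
        exact h1.trans (by gcongr; exact hbd p)
  have hBq : ∀ p, ‖q (u p)‖ ≤ Bq := by
    intro p
    calc ‖q (u p)‖ ≤ ‖q 0‖ + ‖q (u p) - q 0‖ := norm_le_insert' _ _
    _ ≤ ‖q 0‖ + Kq * C := by
        gcongr
        have h1 := hq.dist_le_mul (u p) 0
        rw [dist_zero_right] at h1
        rw [← dist_eq_norm]
        exact h1.trans (by gcongr; exact hbd p)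
  have hBη0 : 0 ≤ Bη := le_trans (norm_nonneg _) (hBη (0,0))
  have hCψ0 : 0 ≤ Cψ := le_trans (norm_nonneg _) (hCψ 0)
  -- the bump function
  set b : ContDiffBump (0:ℝ) := ⟨1/2, 1, by norm_num, by norm_num⟩ with hbdef
  have hbIn : b.rIn = 1/2 := rfl
  have hbOut : b.rOut = 1 := rfl
  set d : ℝ → ℝ := deriv (b : ℝ → ℝ) with hddef
  have hdcont : Continuous d := (b.contDiff (n := (⊤:ℕ∞))).continuous_deriv (by exact_mod_cast le_top)
  obtain ⟨D, hD⟩ := (b.hasCompactSupport.deriv).exists_bound_of_continuous hdcont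
  have hD0 : 0 ≤ D := le_trans (norm_nonneg _) (hD 0)
  have hd0 : ∀ y : ℝ, 1 < |y| → d y = 0 := by
    intro y hy
    by_contra hne
    have := support_deriv_subset (f := (b : ℝ → ℝ)) (Function.mem_support.2 hne)
    rw [b.tsupport_eq] at this
    rw [Metric.mem_closedBall, Real.dist_eq, sub_zero, hbOut] at this
    exact absurd this (not_le.2 hy)
  -- the scaling sequence
  set ε : ℕ → ℝ := fun n => tb / (2 * (n + 1)) with hεdef
  have hε0 : ∀ n, 0 < ε n := fun n => div_pos htb (by positivity)
  have hεle : ∀ n, ε n ≤ tb / 2 := by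
    intro n
    have hn : (0:ℝ) ≤ (n:ℝ) := Nat.cast_nonneg n
    apply div_le_div_of_nonneg_left htb.le (by norm_num) (by nlinarith)
  have hεlt : ∀ n, ε n < tb := fun n => lt_of_le_of_lt (hεle n) (by linarith)
  have hεto : Tendsto ε atTop (𝓝 0) := by
    have h1 : Tendsto (fun n : ℕ => 1 / ((n:ℝ) + 1)) atTop (𝓝 0) :=
      tendsto_one_div_add_atTop_nhds_zero_nat
    have := h1.const_mul (tb / 2)
    rw [mul_zero] at this
    refine this.congr fun n => ?_
    rw [div_mul_div_comm, mul_one]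
  -- the mollifier family in time
  set h : ℕ → ℝ → ℝ := fun n t => b ((t - tb) / ε n) with hhdef
  set dh : ℕ → ℝ → ℝ := fun n t => d ((t - tb) / ε n) / ε n with hdhdef
  have hh01 : ∀ n t, h n t ∈ Icc (0:ℝ) 1 := fun n t => ⟨b.nonneg, b.le_one⟩
  have hhtb : ∀ n, h n tb = 1 := by
    intro n
    show b ((tb - tb) / ε n) = 1
    rw [sub_self, zero_div]
    exact b.one_of_mem_closedBall (Metric.mem_closedBall_self (by rw [hbIn]; norm_num))
  have hh0 : ∀ n t, ε n ≤ |t - tb| → h n t = 0 := by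
    intro n t ht
    apply b.zero_of_le_dist
    rw [Real.dist_eq, sub_zero, hbOut, abs_div, abs_of_pos (hε0 n), le_div_iff₀ (hε0 n)]
    linarith
  have hdh0 : ∀ n t, ε n < |t - tb| → dh n t = 0 := by
    intro n t ht
    show d ((t - tb) / ε n) / ε n = 0
    rw [hd0 _ ?_, zero_div]
    rw [abs_div, abs_of_pos (hε0 n), lt_div_iff₀ (hε0 n)]
    linarith
  have hdhbd : ∀ n t, ‖dh n t‖ ≤ D / ε n := by
    intro n t
    show ‖d ((t - tb) / ε n) / ε n‖ ≤ D / ε n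
    rw [norm_div, Real.norm_eq_abs (ε n), abs_of_pos (hε0 n)]
    gcongr
    exact hD _
  have hderiv : ∀ n t, HasDerivAt (h n) (dh n t) t := by
    intro n t
    have hin : HasDerivAt (fun s : ℝ => (s - tb) / ε n) (1 / ε n) t := by
      simpa using ((hasDerivAt_id t).sub_const tb).div_const (ε n)
    have hout : HasDerivAt (b : ℝ → ℝ) (d ((t - tb) / ε n)) ((t - tb) / ε n) :=
      ((b.contDiff (n := (⊤:ℕ∞))).differentiable
        (by simp)).differentiableAt.hasDerivAt
    have hc := hout.comp t hin
    have : d ((t - tb) / ε n) * (1 / ε n) = dh n t := by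
      show _ = d ((t - tb) / ε n) / ε n
      ring
    rw [this] at hc
    exact hc
  have hhcont : ∀ n, Continuous (h n) := fun n =>
    b.continuous.comp ((continuous_id.sub continuous_const).div_const _)
  have hdhcont : ∀ n, Continuous (dh n) := fun n =>
    (hdcont.comp ((continuous_id.sub continuous_const).div_const _)).div_const _
  -- G and its properties
  have humeas : ∀ t : ℝ, Measurable (fun x => u (t, x)) := fun t =>
    hmeas.comp measurable_prodMk_left
  have hηu : Measurable fun p : ℝ × ℝ => η (u p) := hη.continuous.measurable.comp hmeas
  have hqu : Measurable fun p : ℝ × ℝ => q (u p) := hq.continuous.measurable.comp hmeas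
  set G : ℝ → ℝ := fun t => ∫ x, ψ x * η (u (t, x)) with hGdef
  have hGm : StronglyMeasurable G :=
    (((hψs.continuous.measurable.comp measurable_snd).mul hηu).stronglyMeasurable
      (f := fun p : ℝ × ℝ => ψ p.2 * η (u p))).integral_prod_right'
  have hfint : ∀ t : ℝ, Integrable (fun x => ψ x * η (u (t, x))) := by
    intro t
    refine integrable_of_bound_support' volume _ (Icc (-M) M)
      ((hψs.continuous.measurable.mul
        (hη.continuous.measurable.comp (humeas t))).aestronglyMeasurable)
      measurableSet_Icc measure_Icc_lt_top (Cψ * Bη) (fun x => ?_)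
      (fun x hx => by rw [hψ0 x hx, zero_mul])
    rw [norm_mul]
    exact mul_le_mul (hCψ x) (hBη _) (norm_nonneg _) hCψ0
  set GB : ℝ := Cψ * Bη * (2 * M) with hGBdef
  have hGbd : ∀ t, ‖G t‖ ≤ GB := by
    intro t
    have e : G t = ∫ x in Icc (-M) M, ψ x * η (u (t, x)) :=
      (setIntegral_eq_integral_of_forall_compl_eq_zero
        (fun x hx => by rw [hψ0 x hx, zero_mul])).symm
    rw [e]
    refine (norm_setIntegral_le_of_norm_le_const (C := Cψ * Bη) measure_Icc_lt_top
      (fun x _ => by rw [norm_mul]; exact mul_le_mul (hCψ x) (hBη _) (norm_nonneg _) hCψ0)).trans ?_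
    rw [Real.volume_real_Icc_of_le (by linarith)]
    exact le_of_eq (by rw [hGBdef]; ring)
  have hGdiff : ∀ s : ℝ,
      ‖G s - G tb‖ ≤ Cψ * Kη * ∫ x in Icc (-M) M, ‖u (s, x) - u (tb, x)‖ := by
    intro s
    have e1 : G s - G tb = ∫ x, ψ x * (η (u (s, x)) - η (u (tb, x))) := by
      rw [← integral_sub (hfint s) (hfint tb)]
      congr 1
      ext x
      ring
    have e2 : (∫ x, ψ x * (η (u (s, x)) - η (u (tb, x))))
        = ∫ x in Icc (-M) M, ψ x * (η (u (s, x)) - η (u (tb, x))) :=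
      (setIntegral_eq_integral_of_forall_compl_eq_zero
        (fun x hx => by rw [hψ0 x hx, zero_mul])).symm
    rw [e1, e2]
    refine (norm_integral_le_integral_norm _).trans ?_
    have hint2 : IntegrableOn (fun x => Cψ * Kη * ‖u (s, x) - u (tb, x)‖) (Icc (-M) M) := by
      refine Measure.integrableOn_of_bounded (M := Cψ * Kη * (2 * C)) measure_Icc_lt_top.ne
        ((measurable_const.mul (((humeas s).sub (humeas tb)).norm)).aestronglyMeasurable)
        (.of_forall fun x => ?_)
      rw [Real.norm_eq_abs, abs_of_nonneg (mul_nonneg (mul_nonneg hCψ0 Kη.coe_nonneg) (norm_nonneg _))]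
      have : ‖u (s, x) - u (tb, x)‖ ≤ 2 * C :=
        (norm_sub_le _ _).trans (by have := hbd (s, x); have := hbd (tb, x); linarith)
      have hKη : (0:ℝ) ≤ Cψ * Kη := mul_nonneg hCψ0 Kη.coe_nonneg
      nlinarith
    have hint1 : IntegrableOn (fun x => ‖ψ x * (η (u (s, x)) - η (u (tb, x)))‖) (Icc (-M) M) :=
      (((hfint s).sub (hfint tb)).congr (.of_forall fun x => by simp only [Pi.sub_apply]; ring)).norm.integrableOn
    refine (setIntegral_mono_on hint1 hint2 measurableSet_Icc (fun x _ => ?_)).trans ?_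
    · rw [norm_mul]
      have hd : ‖η (u (s, x)) - η (u (tb, x))‖ ≤ Kη * ‖u (s, x) - u (tb, x)‖ := by
        rw [← dist_eq_norm, ← dist_eq_norm]
        exact hη.dist_le_mul _ _
      calc ‖ψ x‖ * ‖η (u (s, x)) - η (u (tb, x))‖
          ≤ Cψ * (Kη * ‖u (s, x) - u (tb, x)‖) :=
            mul_le_mul (hCψ x) hd (norm_nonneg _) hCψ0
        _ = Cψ * Kη * ‖u (s, x) - u (tb, x)‖ := by ring
    · rw [← integral_const_mul]
  have hGcont : Tendsto (fun s => ‖G s - G tb‖) (𝓝 tb) (𝓝 0) := by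
    have hI := (hcont tb htb M hM).const_mul (Cψ * (Kη:ℝ))
    rw [mul_zero] at hI
    exact squeeze_zero (fun s => norm_nonneg _) hGdiff hI
  -- the test functions
  set φ : ℕ → ℝ × ℝ → ℝ := fun n p => h n p.1 * ψ p.2 with hφdef
  have hφs : ∀ n, ContDiff ℝ 1 (φ n) := by
    intro n
    have hbs : ContDiff ℝ 1 (h n) :=
      ((b.contDiff (n := (⊤:ℕ∞))).of_le (by exact_mod_cast le_top)).comp
        ((contDiff_id.sub contDiff_const).div_const _)
    exact (hbs.comp contDiff_fst).mul (hψ1.comp contDiff_snd)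
  set box : ℕ → Set (ℝ × ℝ) := fun n => Icc (tb - ε n) (tb + ε n) ×ˢ Icc (-M) M with hboxdef
  have hboxc : ∀ n, IsCompact (box n) := fun n => isCompact_Icc.prod isCompact_Icc
  have houtIcc : ∀ n (t : ℝ), t ∉ Icc (tb - ε n) (tb + ε n) → ε n < |t - tb| := by
    intro n t ht
    by_contra hcon
    rw [not_lt] at hcon
    exact ht ⟨by linarith [(abs_le.1 hcon).1], by linarith [(abs_le.1 hcon).2]⟩
  have hsplit : ∀ n (p : ℝ × ℝ), p ∉ box n →
      p.1 ∉ Icc (tb - ε n) (tb + ε n) ∨ p.2 ∉ Icc (-M) M := by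
    intro n p hp
    by_cases h1 : p.1 ∈ Icc (tb - ε n) (tb + ε n)
    · exact Or.inr fun h2 => hp (mem_prod.2 ⟨h1, h2⟩)
    · exact Or.inl h1
  have hφ0 : ∀ n p, p ∉ box n → φ n p = 0 := by
    intro n p hp
    show h n p.1 * ψ p.2 = 0
    rcases hsplit n p hp with h1 | h1
    · rw [hh0 n p.1 (houtIcc n p.1 h1).le, zero_mul]
    · rw [hψ0 _ h1, mul_zero]
  have hφsupp : ∀ n, tsupport (φ n) ⊆ box n := fun n =>
    closure_minimal (fun p hp => by by_contra hc; exact hp (hφ0 n p hc))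
      (hboxc n).isClosed
  have hφc : ∀ n, HasCompactSupport (φ n) := fun n =>
    (hboxc n).of_isClosed_subset (isClosed_tsupport _) (hφsupp n)
  have hφpos : ∀ n, tsupport (φ n) ⊆ {p : ℝ × ℝ | 0 < p.1} := by
    intro n p hp
    have h1 := (hφsupp n hp).1.1
    have h2 := hεle n
    show 0 < p.1
    linarith
  -- the derivative of the test functions
  have hφfd : ∀ n (p : ℝ × ℝ), HasFDerivAt (φ n)
      (h n p.1 • (deriv ψ p.2 • ContinuousLinearMap.snd ℝ ℝ ℝ)
        + ψ p.2 • (dh n p.1 • ContinuousLinearMap.fst ℝ ℝ ℝ)) p := by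
    intro n p
    have hf1 : HasFDerivAt (fun p : ℝ × ℝ => h n p.1)
        (dh n p.1 • ContinuousLinearMap.fst ℝ ℝ ℝ) p :=
      (hderiv n p.1).comp_hasFDerivAt p hasFDerivAt_fst
    have hf2 : HasFDerivAt (fun p : ℝ × ℝ => ψ p.2)
        (deriv ψ p.2 • ContinuousLinearMap.snd ℝ ℝ ℝ) p :=
      ((hψ1.differentiable one_ne_zero) p.2).hasDerivAt.comp_hasFDerivAt p hasFDerivAt_snd
    exact hf1.mul hf2
  have hfd1 : ∀ n p, fderiv ℝ (φ n) p (1, 0) = dh n p.1 * ψ p.2 := by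
    intro n p
    rw [(hφfd n p).fderiv]
    simp [ContinuousLinearMap.smul_apply, smul_eq_mul]
    ring
  have hfd2 : ∀ n p, fderiv ℝ (φ n) p (0, 1) = h n p.1 * deriv ψ p.2 := by
    intro n p
    rw [(hφfd n p).fderiv]
    simp [ContinuousLinearMap.smul_apply, smul_eq_mul]
  -- integrability of the two RHS terms
  have hInt1 : ∀ n, Integrable (fun p : ℝ × ℝ => dh n p.1 * (ψ p.2 * η (u p))) := by
    intro n
    refine integrable_of_bound_support' volume _ (box n)
      ((((hdhcont n).measurable.comp measurable_fst).mul
        ((hψs.continuous.measurable.comp measurable_snd).mul hηu)).aestronglyMeasurable)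
      (hboxc n).isClosed.measurableSet (hboxc n).measure_lt_top
      (D / ε n * (Cψ * Bη)) (fun p => ?_) (fun p hp => ?_)
    · rw [norm_mul]
      refine mul_le_mul (hdhbd n p.1) ?_ (norm_nonneg _)
        (div_nonneg hD0 (hε0 n).le)
      rw [norm_mul]
      exact mul_le_mul (hCψ _) (hBη _) (norm_nonneg _) hCψ0
    · rcases hsplit n p hp with h1 | h1
      · rw [hdh0 n p.1 (houtIcc n p.1 h1), zero_mul]
      · rw [hψ0 _ h1, zero_mul, mul_zero]
  have hInt2 : ∀ n, Integrable (fun p : ℝ × ℝ => h n p.1 * (deriv ψ p.2 * q (u p))) := by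
    intro n
    refine integrable_of_bound_support' volume _ (box n)
      ((((hhcont n).measurable.comp measurable_fst).mul
        ((hψ'cont.measurable.comp measurable_snd).mul hqu)).aestronglyMeasurable)
      (hboxc n).isClosed.measurableSet (hboxc n).measure_lt_top
      (1 * (Cψ' * Bq)) (fun p => ?_) (fun p hp => ?_)
    · rw [norm_mul]
      refine mul_le_mul ?_ ?_ (norm_nonneg _) (by norm_num)
      · rw [Real.norm_eq_abs, abs_of_nonneg (hh01 n p.1).1]
        exact (hh01 n p.1).2
      · rw [norm_mul]
        refine mul_le_mul (hCψ' _) (hBq _) (norm_nonneg _)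
          (le_trans (norm_nonneg _) (hCψ' 0))
    · rcases hsplit n p hp with h1 | h1
      · rw [hh0 n p.1 (houtIcc n p.1 h1).le, zero_mul]
      · rw [hψ'0 _ h1, zero_mul, mul_zero]
  -- the representation applied to our test functions
  have hE : ∀ n, (∫ p, φ n p ∂μp) - (∫ p, φ n p ∂μm)
      = -((∫ p : ℝ × ℝ, dh n p.1 * (ψ p.2 * η (u p)))
          + (∫ p : ℝ × ℝ, h n p.1 * (deriv ψ p.2 * q (u p)))) := by
    intro n
    rw [hrepr (φ n) (hφs n) (hφc n) (hφpos n)]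
    congr 1
    have hcongr : ∀ p : ℝ × ℝ,
        fderiv ℝ (φ n) p (1, 0) * η (u p) + fderiv ℝ (φ n) p (0, 1) * q (u p)
        = dh n p.1 * (ψ p.2 * η (u p)) + h n p.1 * (deriv ψ p.2 * q (u p)) := by
      intro p
      rw [hfd1, hfd2]
      ring
    simp only [hcongr]
    rw [setIntegral_eq_integral_of_forall_compl_eq_zero (fun p hp => ?_),
      integral_add (hInt1 n) (hInt2 n)]
    have hp1 : p.1 ≤ 0 := le_of_not_gt hp
    have habs : tb ≤ |p.1 - tb| := by
      rw [abs_sub_comm, abs_of_nonneg (by linarith)]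
      linarith
    rw [hdh0 n p.1 (lt_of_lt_of_le (hεlt n) habs), hh0 n p.1 ((hεle n).trans
      (le_trans (by linarith) habs)), zero_mul, zero_mul, add_zero]
  -- Fubini for the first term
  set G2 : ℝ → ℝ := fun t => ∫ x, deriv ψ x * q (u (t, x)) with hG2def
  have hAfub : ∀ n, (∫ p : ℝ × ℝ, dh n p.1 * (ψ p.2 * η (u p))) = ∫ t, dh n t * G t := by
    intro n
    have hi : Integrable (fun p : ℝ × ℝ => dh n p.1 * (ψ p.2 * η (u p)))
        ((volume : Measure ℝ).prod volume) := by
      rw [← Measure.volume_eq_prod]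
      exact hInt1 n
    rw [show (volume : Measure (ℝ × ℝ)) = (volume : Measure ℝ).prod volume
        from Measure.volume_eq_prod ℝ ℝ, integral_prod _ hi]
    refine integral_congr_ae (.of_forall fun t => ?_)
    show (∫ x : ℝ, dh n t * (ψ x * η (u (t, x)))) = dh n t * G t
    rw [integral_const_mul]
  -- the time integral of dh vanishes
  have hdhint : ∀ n, (∫ t, dh n t) = 0 := by
    intro n
    have e1 : (∫ t, dh n t) = ∫ t in Icc (tb - ε n) (tb + ε n), dh n t :=
      (setIntegral_eq_integral_of_forall_compl_eq_zero
        (fun t ht => hdh0 n t (houtIcc n t ht))).symm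
    have hle : tb - ε n ≤ tb + ε n := by linarith [hε0 n]
    rw [e1, integral_Icc_eq_integral_Ioc, ← intervalIntegral.integral_of_le hle,
      intervalIntegral.integral_eq_sub_of_hasDerivAt (fun t _ => hderiv n t)
        ((hdhcont n).intervalIntegrable _ _)]
    rw [hh0 n _ (by rw [add_sub_cancel_left, abs_of_pos (hε0 n)]),
      hh0 n _ (by rw [sub_sub_cancel_left, abs_neg, abs_of_pos (hε0 n)]), sub_zero]
  have hGB0 : 0 ≤ GB := le_trans (norm_nonneg _) (hGbd 0)
  have hdhintg : ∀ n, Integrable (dh n) := by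
    intro n
    refine integrable_of_bound_support' volume _ (Icc (tb - ε n) (tb + ε n))
      (hdhcont n).aestronglyMeasurable measurableSet_Icc measure_Icc_lt_top
      (D / ε n) (hdhbd n) (fun t ht => hdh0 n t (houtIcc n t ht))
  have hT1 : ∀ n (F : ℝ → ℝ), StronglyMeasurable F → (∀ t, ‖F t‖ ≤ 2 * GB) →
      Integrable (fun t => dh n t * F t) := by
    intro n F hFm hFb
    refine integrable_of_bound_support' volume _ (Icc (tb - ε n) (tb + ε n))
      (((hdhcont n).measurable.mul hFm.measurable).aestronglyMeasurable)
      measurableSet_Icc measure_Icc_lt_top (D / ε n * (2 * GB)) (fun t => ?_)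
      (fun t ht => by rw [hdh0 n t (houtIcc n t ht), zero_mul])
    rw [norm_mul]
    exact mul_le_mul (hdhbd n t) (hFb t) (norm_nonneg _) (div_nonneg hD0 (hε0 n).le)
  have hGsubb : ∀ t, ‖G t - G tb‖ ≤ 2 * GB := fun t =>
    (norm_sub_le _ _).trans (by have h1 := hGbd t; have h2 := hGbd tb; linarith)
  have hGb' : ∀ t, ‖G t‖ ≤ 2 * GB := fun t => (hGbd t).trans (by linarith)
  have hAsmall : ∀ n, ‖∫ t, dh n t * G t‖
      ≤ D / ε n * ∫ t in Icc (tb - ε n) (tb + ε n), ‖G t - G tb‖ := by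
    intro n
    have hT1g := hT1 n G hGm hGb'
    have hT1gb := hT1 n (fun t => G t - G tb) (hGm.sub stronglyMeasurable_const) hGsubb
    have e0 : (∫ t, dh n t * G t) = ∫ t, dh n t * (G t - G tb) := by
      have e1 : (fun t => dh n t * (G t - G tb))
          = fun t => dh n t * G t - dh n t * G tb := by
        funext t
        ring
      rw [e1, integral_sub hT1g ((hdhintg n).mul_const _), integral_mul_const,
        hdhint n, zero_mul, sub_zero]
    rw [e0]
    have e2 : (∫ t, dh n t * (G t - G tb))
        = ∫ t in Icc (tb - ε n) (tb + ε n), dh n t * (G t - G tb) :=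
      (setIntegral_eq_integral_of_forall_compl_eq_zero
        (fun t ht => by rw [hdh0 n t (houtIcc n t ht), zero_mul])).symm
    rw [e2]
    refine (norm_integral_le_integral_norm _).trans ?_
    rw [← integral_const_mul]
    refine setIntegral_mono_on hT1gb.norm.integrableOn ?_ measurableSet_Icc
      (fun t _ => ?_)
    · refine Measure.integrableOn_of_bounded (M := D / ε n * (2 * GB))
        measure_Icc_lt_top.ne ((measurable_const.mul
          ((hGm.measurable.sub measurable_const).norm)).aestronglyMeasurable)
        (.of_forall fun t => ?_)
      rw [Real.norm_eq_abs, abs_of_nonneg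
        (mul_nonneg (div_nonneg hD0 (hε0 n).le) (norm_nonneg _))]
      exact mul_le_mul_of_nonneg_left (hGsubb t) (div_nonneg hD0 (hε0 n).le)
    · rw [norm_mul]
      exact mul_le_mul_of_nonneg_right (hdhbd n t) (norm_nonneg _)
  have hAto : Tendsto (fun n => ∫ t, dh n t * G t) atTop (𝓝 0) := by
    refine squeeze_zero_norm hAsmall ?_
    rw [NormedAddCommGroup.tendsto_nhds_zero]
    intro δ hδ
    set δ' : ℝ := δ / (2 * (D + 1)) with hδ'def
    have hδ' : 0 < δ' := by positivity
    obtain ⟨r, hr0, hrb⟩ := Metric.eventually_nhds_iff.1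
      (hGcont.eventually (gt_mem_nhds hδ'))
    filter_upwards [hεto.eventually (gt_mem_nhds hr0)] with n hn
    have hInorm : IntegrableOn (fun t => ‖G t - G tb‖) (Icc (tb - ε n) (tb + ε n)) := by
      refine Measure.integrableOn_of_bounded (M := 2 * GB) measure_Icc_lt_top.ne
        ((hGm.measurable.sub measurable_const).norm.aestronglyMeasurable)
        (.of_forall fun t => ?_)
      rw [Real.norm_eq_abs, abs_of_nonneg (norm_nonneg _)]
      exact hGsubb t
    have hb1 : (∫ t in Icc (tb - ε n) (tb + ε n), ‖G t - G tb‖) ≤ δ' * (2 * ε n) := by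
      refine le_trans (setIntegral_mono_on (g := fun _ => δ') hInorm
        (integrableOn_const measure_Icc_lt_top.ne) measurableSet_Icc
        (fun t ht => ?_)) ?_
      · refine le_of_lt (hrb ?_)
        rw [Real.dist_eq]
        have h1 := ht.1
        have h2 := ht.2
        have : |t - tb| ≤ ε n := abs_le.2 ⟨by linarith, by linarith⟩
        exact lt_of_le_of_lt this hn
      · rw [setIntegral_const, Real.volume_real_Icc_of_le (by linarith [hε0 n]), smul_eq_mul]
        exact le_of_eq (by ring)
    have hb2 : (0:ℝ) ≤ ∫ t in Icc (tb - ε n) (tb + ε n), ‖G t - G tb‖ :=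
      integral_nonneg fun t => norm_nonneg _
    have hval : D / ε n * (∫ t in Icc (tb - ε n) (tb + ε n), ‖G t - G tb‖)
        ≤ D / ε n * (δ' * (2 * ε n)) :=
      mul_le_mul_of_nonneg_left hb1 (div_nonneg hD0 (hε0 n).le)
    have heq : D / ε n * (δ' * (2 * ε n)) = 2 * D * δ' := by
      field_simp
      exact mul_div_cancel_right₀ D (hε0 n).ne'
    rw [Real.norm_eq_abs, abs_of_nonneg (mul_nonneg (div_nonneg hD0 (hε0 n).le) hb2)]
    have hfin : 2 * D * δ' < δ := by
      have hD1 : (0:ℝ) < D + 1 := by linarith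
      have he : 2 * D * δ' = D * δ / (D + 1) := by
        rw [hδ'def]
        field_simp
      rw [he, div_lt_iff₀ hD1]
      nlinarith
    exact lt_of_le_of_lt (heq ▸ hval) hfin
  -- second term tends to zero
  have hBsmall : ∀ n, ‖∫ p : ℝ × ℝ, h n p.1 * (deriv ψ p.2 * q (u p))‖
      ≤ Cψ' * Bq * (2 * ε n * (2 * M)) := by
    intro n
    have hCψ'0 : 0 ≤ Cψ' := le_trans (norm_nonneg _) (hCψ' 0)
    have e : (∫ p : ℝ × ℝ, h n p.1 * (deriv ψ p.2 * q (u p)))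
        = ∫ p in box n, h n p.1 * (deriv ψ p.2 * q (u p)) := by
      refine (setIntegral_eq_integral_of_forall_compl_eq_zero (fun p hp => ?_)).symm
      rcases hsplit n p hp with h1 | h1
      · rw [hh0 n p.1 (houtIcc n p.1 h1).le, zero_mul]
      · rw [hψ'0 _ h1, zero_mul, mul_zero]
    rw [e]
    refine (norm_setIntegral_le_of_norm_le_const (C := Cψ' * Bq)
      (hboxc n).measure_lt_top (fun p _ => ?_)).trans ?_
    · rw [norm_mul]
      have h1 : ‖h n p.1‖ ≤ 1 := by
        rw [Real.norm_eq_abs, abs_of_nonneg (hh01 n p.1).1]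
        exact (hh01 n p.1).2
      have h2 : ‖deriv ψ p.2 * q (u p)‖ ≤ Cψ' * Bq := by
        rw [norm_mul]
        exact mul_le_mul (hCψ' _) (hBq _) (norm_nonneg _) hCψ'0
      calc ‖h n p.1‖ * ‖deriv ψ p.2 * q (u p)‖
          ≤ 1 * (Cψ' * Bq) := mul_le_mul h1 h2 (norm_nonneg _) (by norm_num)
        _ = Cψ' * Bq := one_mul _
    · have hv : volume (box n)
          = ENNReal.ofReal (tb + ε n - (tb - ε n)) * ENNReal.ofReal (M - -M) := by
        rw [hboxdef, Measure.volume_eq_prod, Measure.prod_prod, Real.volume_Icc,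
          Real.volume_Icc]
      rw [Measure.real, hv, ENNReal.toReal_mul, ENNReal.toReal_ofReal (by linarith [hε0 n]),
        ENNReal.toReal_ofReal (by linarith)]
      exact le_of_eq (by ring)
  have hBto : Tendsto (fun n => ∫ p : ℝ × ℝ, h n p.1 * (deriv ψ p.2 * q (u p)))
      atTop (𝓝 0) := by
    refine squeeze_zero_norm hBsmall ?_
    have := hεto.const_mul (Cψ' * Bq * 4 * M)
    rw [mul_zero] at this
    exact this.congr fun n => by ring
  -- dominated convergence for the measures
  have hslicem : MeasurableSet {p : ℝ × ℝ | p.1 = tb} :=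
    measurable_fst (measurableSet_singleton tb)
  have hDCT : ∀ (μ : Measure (ℝ × ℝ)), IsLocallyFiniteMeasure μ →
      Tendsto (fun n => ∫ p, φ n p ∂μ) atTop
        (𝓝 (∫ p in {p : ℝ × ℝ | p.1 = tb}, ψ p.2 ∂μ)) := by
    intro μ hμ
    set box2 : Set (ℝ × ℝ) := Icc (tb - tb / 2) (tb + tb / 2) ×ˢ Icc (-M) M with hbox2def
    have hbox2c : IsCompact box2 := isCompact_Icc.prod isCompact_Icc
    have hboxsub : ∀ n, box n ⊆ box2 := by
      intro n
      rw [hboxdef, hbox2def]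
      refine prod_mono (Icc_subset_Icc ?_ ?_) subset_rfl
      · linarith [hεle n]
      · linarith [hεle n]
    set g : ℝ × ℝ → ℝ := box2.indicator fun _ => Cψ with hgdef
    have hgint : Integrable g μ :=
      (integrable_indicator_iff hbox2c.isClosed.measurableSet).2
        (integrableOn_const hbox2c.measure_lt_top.ne)
    have hlim : ∀ p : ℝ × ℝ, Tendsto (fun n => φ n p) atTop
        (𝓝 (({p : ℝ × ℝ | p.1 = tb}.indicator (fun p => ψ p.2)) p)) := by
      intro p
      by_cases hp : p.1 = tb
      · have he : ∀ n, φ n p = ψ p.2 := fun n => by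
          show h n p.1 * ψ p.2 = _
          rw [hp, hhtb n, one_mul]
        rw [indicator_of_mem (show p ∈ {p : ℝ × ℝ | p.1 = tb} from hp)
          (fun p : ℝ × ℝ => ψ p.2)]
        exact tendsto_const_nhds.congr fun n => (he n).symm
      · rw [indicator_of_notMem (show p ∉ {p : ℝ × ℝ | p.1 = tb} from hp)
          (fun p : ℝ × ℝ => ψ p.2)]
        have habs : 0 < |p.1 - tb| := abs_pos.2 (sub_ne_zero.2 hp)
        refine Tendsto.congr' ?_ tendsto_const_nhds
        filter_upwards [hεto.eventually (gt_mem_nhds habs)] with n hn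
        show (0:ℝ) = φ n p
        rw [show φ n p = h n p.1 * ψ p.2 from rfl, hh0 n p.1 hn.le, zero_mul]
    rw [← integral_indicator hslicem]
    refine tendsto_integral_of_dominated_convergence g
      (fun n => (((hhcont n).comp continuous_fst).mul
        (hψs.continuous.comp continuous_snd)).aestronglyMeasurable) hgint
      (fun n => .of_forall fun p => ?_) (.of_forall hlim)
    by_cases hp : p ∈ box2
    · rw [hgdef, indicator_of_mem hp]
      show ‖h n p.1 * ψ p.2‖ ≤ Cψ
      rw [norm_mul]
      have h1 : ‖h n p.1‖ ≤ 1 := by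
        rw [Real.norm_eq_abs, abs_of_nonneg (hh01 n p.1).1]
        exact (hh01 n p.1).2
      calc ‖h n p.1‖ * ‖ψ p.2‖ ≤ 1 * Cψ :=
          mul_le_mul h1 (hCψ _) (norm_nonneg _) (by norm_num)
        _ = Cψ := one_mul _
    · rw [hgdef, indicator_of_notMem hp, hφ0 n p (fun hmem => hp (hboxsub n hmem))]
      simp
  -- put everything together
  have hlhs : Tendsto (fun n => (∫ p, φ n p ∂μp) - ∫ p, φ n p ∂μm) atTop
      (𝓝 ((∫ p in {p : ℝ × ℝ | p.1 = tb}, ψ p.2 ∂μp)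
        - ∫ p in {p : ℝ × ℝ | p.1 = tb}, ψ p.2 ∂μm)) :=
    (hDCT μp inferInstance).sub (hDCT μm inferInstance)
  have hAto' : Tendsto (fun n => ∫ p : ℝ × ℝ, dh n p.1 * (ψ p.2 * η (u p)))
      atTop (𝓝 0) := hAto.congr fun n => (hAfub n).symm
  have hrhs : Tendsto (fun n => (∫ p, φ n p ∂μp) - ∫ p, φ n p ∂μm) atTop (𝓝 0) := by
    have hs := (hAto'.add hBto).neg
    rw [add_zero, neg_zero] at hs
    exact hs.congr fun n => (hE n).symm
  have := tendsto_nhds_unique hlhs hrhs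
  linarith


/-- If μ_η = ∂ₜη(u) + ∂ₓq(u) is a locally finite signed measure (written as the
difference of mutually singular locally finite measures μp, μm) and u is strongly
time continuous with values in L¹_loc, then μ_η gives no mass to any time slice. -/
theorem stmt_8 (u : ℝ × ℝ → ℝ × ℝ) (hmeas : Measurable u) (C : ℝ)
    (hbd : ∀ p, ‖u p‖ ≤ C)
    (η q : ℝ × ℝ → ℝ) (Kη Kq : NNReal) (hη : LipschitzWith Kη η) (hq : LipschitzWith Kq q)
    (hcont : ∀ t : ℝ, 0 < t → ∀ M : ℝ, 0 < M →
      Tendsto (fun s : ℝ => ∫ x in Icc (-M) M, ‖u (s, x) - u (t, x)‖) (𝓝 t) (𝓝 0))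
    (μp μm : Measure (ℝ × ℝ)) [IsLocallyFiniteMeasure μp] [IsLocallyFiniteMeasure μm]
    (hsing : μp ⟂ₘ μm)
    (hrepr : ∀ φ : ℝ × ℝ → ℝ, ContDiff ℝ 1 φ → HasCompactSupport φ →
      tsupport φ ⊆ {p : ℝ × ℝ | 0 < p.1} →
      (∫ p, φ p ∂μp) - (∫ p, φ p ∂μm) =
        -∫ p in {p : ℝ × ℝ | 0 < p.1},
          (fderiv ℝ φ p (1, 0) * η (u p) + fderiv ℝ φ p (0, 1) * q (u p))) :
    ∀ tb : ℝ, 0 < tb →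
      μp {p : ℝ × ℝ | p.1 = tb} = 0 ∧ μm {p : ℝ × ℝ | p.1 = tb} = 0 := by
  intro tb htb
  set slice : Set (ℝ × ℝ) := {p : ℝ × ℝ | p.1 = tb} with hslicedef
  have hslicem : MeasurableSet slice := measurable_fst (measurableSet_singleton tb)
  set τp : Measure ℝ := (μp.restrict slice).map Prod.snd with hτpdef
  set τm : Measure ℝ := (μm.restrict slice).map Prod.snd with hτmdef
  have hτapp : ∀ (μ : Measure (ℝ × ℝ)) (E : Set ℝ), MeasurableSet E →
      (μ.restrict slice).map Prod.snd E = μ (Prod.snd ⁻¹' E ∩ slice) := by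
    intro μ E hE
    rw [Measure.map_apply measurable_snd hE, Measure.restrict_apply (measurable_snd hE)]
  have hfmc : ∀ (μ : Measure (ℝ × ℝ)), IsLocallyFiniteMeasure μ →
      IsFiniteMeasureOnCompacts ((μ.restrict slice).map Prod.snd) := by
    intro μ hμ
    constructor
    intro K hK
    rw [hτapp μ K hK.isClosed.measurableSet]
    have he : Prod.snd ⁻¹' K ∩ slice = {tb} ×ˢ K := by
      ext p
      simp only [mem_inter_iff, mem_preimage, mem_setOf_eq, mem_prod, mem_singleton_iff]
      tauto
    rw [he]
    exact (isCompact_singleton.prod hK).measure_lt_top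
  haveI h1 := hfmc μp inferInstance
  haveI h2 := hfmc μm inferInstance
  have hkey : ∀ ψ : ℝ → ℝ, ContDiff ℝ (⊤:ℕ∞) ψ → HasCompactSupport ψ →
      (∀ x, ψ x ∈ Icc (0:ℝ) 1) → ∫ x, ψ x ∂τp = ∫ x, ψ x ∂τm := by
    intro ψ hs hc _
    have h1 := key_limit u hmeas C hbd η q Kη Kq hη hq hcont μp μm hrepr tb htb ψ hs hc
    rw [hτpdef, hτmdef,
      integral_map measurable_snd.aemeasurable hs.continuous.aestronglyMeasurable,
      integral_map measurable_snd.aemeasurable hs.continuous.aestronglyMeasurable]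
    exact h1
  have hττ : τp = τm := measure_ext_of_smooth τp τm hkey
  have hsec : ∀ (E : Set (ℝ × ℝ)), Prod.snd ⁻¹' ((fun x : ℝ => (tb, x)) ⁻¹' E) ∩ slice
      = slice ∩ E := by
    intro E
    ext p
    simp only [mem_inter_iff, mem_preimage, mem_setOf_eq]
    constructor
    · rintro ⟨hE1, hp1⟩
      exact ⟨hp1, by rwa [show (tb, p.2) = p from by rw [← hp1]] at hE1⟩
    · rintro ⟨hp1, hE1⟩
      exact ⟨by rw [show (tb, p.2) = p from by rw [← hp1]]; exact hE1, hp1⟩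
  have hval : ∀ (E : Set (ℝ × ℝ)), MeasurableSet E → μp (slice ∩ E) = μm (slice ∩ E) := by
    intro E hE
    rw [← hsec E, ← hτapp μp _ (measurable_prodMk_left hE),
      ← hτapp μm _ (measurable_prodMk_left hE), ← hτpdef, ← hτmdef, hττ]
  obtain ⟨s, hsm, hs1, hs2⟩ := hsing
  have hp1 : μp (slice ∩ s) = 0 := measure_mono_null inter_subset_right hs1
  have hm2 : μm (slice ∩ sᶜ) = 0 := measure_mono_null inter_subset_right hs2
  have hp2 : μp (slice ∩ sᶜ) = 0 := by rw [hval sᶜ hsm.compl]; exact hm2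
  have hm1 : μm (slice ∩ s) = 0 := by rw [← hval s hsm]; exact hp1
  constructor
  · have := measure_inter_add_diff slice hsm (μ := μp)
    rw [diff_eq] at this
    rw [← this, hp1, hp2, add_zero]
  · have := measure_inter_add_diff slice hsm (μ := μm)
    rw [diff_eq] at this
    rw [← this, hm1, hm2, add_zero]
end
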